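/- arXiv:2404.06839 — 6 statements merged into one kernel-verified Lean document; each statement's English description precedes it below -/
import Mathlib

section
/- Let n be an odd positive integer, z > 0 a real number, θ ∈ (0, π), and w = cos θ. Define the polynomial P_n(s) = (s+r)^n - 2w(-iz)^n + (-1)^n (r-s)^n where r = sqrt(s^2+z^2) (note P_n is a polynomial in s of degree n since only even powers of r appear after expansion). Then for each l ∈ {0, 1, ..., n-1}, the point s_l = -iz cos((θ + 2πl)/n) is a root of P_n. -/
/-- Let `n` be an odd positive integer, `z > 0`, `θ ∈ (0,π)`, `w = cos θ`.
For each `l ∈ {0,…,n-1}`, the point `s_l = -iz cos((θ+2πl)/n)` is a root of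
`P_n(s) = (s+r)^n - 2w(-iz)^n + (-1)^n (r-s)^n`, where `r` is any square root of
`s_l² + z²` (the expression only depends on `r²`). -/
theorem root_of_Pn (n : ℕ) (hodd : Odd n) (hn : 0 < n) (z θ : ℝ) (hz : 0 < z)
    (hθ : θ ∈ Set.Ioo 0 Real.pi) (l : ℕ) (hl : l < n) (r : ℂ)
    (hr : r ^ 2 =
      (-Complex.I * (z : ℂ) * (Real.cos ((θ + 2 * Real.pi * l) / n) : ℝ)) ^ 2 + (z : ℂ) ^ 2) :
    (-Complex.I * (z : ℂ) * (Real.cos ((θ + 2 * Real.pi * l) / n) : ℝ) + r) ^ n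
      - 2 * (Real.cos θ : ℂ) * (-Complex.I * (z : ℂ)) ^ n
      + (-1 : ℂ) ^ n *
        (r - (-Complex.I * (z : ℂ) * (Real.cos ((θ + 2 * Real.pi * l) / n) : ℝ))) ^ n = 0 := by
  set φ : ℝ := (θ + 2 * Real.pi * l) / n with hφ
  have hn0 : (n : ℝ) ≠ 0 := Nat.cast_ne_zero.mpr hn.ne'
  have hnφ : (n : ℝ) * φ = θ + 2 * Real.pi * l := by
    rw [hφ]
    field_simp
  have hcosn : Real.cos ((n : ℝ) * φ) = Real.cos θ := by
    rw [hnφ]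
    have : θ + 2 * Real.pi * l = θ + (l : ℝ) * (2 * Real.pi) := by ring
    rw [this, Real.cos_add_nat_mul_two_pi]
  have hpyth : Complex.sin (φ : ℂ) ^ 2 + Complex.cos (φ : ℂ) ^ 2 = 1 :=
    Complex.sin_sq_add_cos_sq _
  -- r^2 = (z sin φ)^2
  have hr2 : r ^ 2 = ((z * Real.sin φ : ℝ) : ℂ) ^ 2 := by
    rw [hr]
    push_cast
    linear_combination ((z : ℂ) * Complex.cos (φ : ℂ)) ^ 2 * Complex.I_sq
      - (z : ℂ) ^ 2 * hpyth
  have hcase : r = ((z * Real.sin φ : ℝ) : ℂ) ∨ r = -((z * Real.sin φ : ℝ) : ℂ) :=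
    sq_eq_sq_iff_eq_or_eq_neg.mp hr2
  -- key identity, for ε = ±1
  have key : ∀ ε : ℂ, ε = 1 ∨ ε = -1 →
      (-Complex.I * (z : ℂ) * (Real.cos φ : ℂ) + ε * ((z * Real.sin φ : ℝ) : ℂ)) ^ n
      - 2 * (Real.cos θ : ℂ) * (-Complex.I * (z : ℂ)) ^ n
      + (-1 : ℂ) ^ n *
        (ε * ((z * Real.sin φ : ℝ) : ℂ) - (-Complex.I * (z : ℂ) * (Real.cos φ : ℂ))) ^ n = 0 := by
    intro ε hε
    have e1 : -Complex.I * (z : ℂ) * (Real.cos φ : ℂ) + ε * ((z * Real.sin φ : ℝ) : ℂ)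
        = -Complex.I * (z : ℂ) * Complex.exp (ε * φ * Complex.I) := by
      rcases hε with h | h <;> subst h <;>
        simp only [one_mul, neg_one_mul, neg_neg, Complex.exp_mul_I,
          Complex.cos_neg, Complex.sin_neg] <;> push_cast
      · linear_combination (z : ℂ) * Complex.sin (φ : ℂ) * Complex.I_sq
      · linear_combination -(z : ℂ) * Complex.sin (φ : ℂ) * Complex.I_sq
    have e2 : ε * ((z * Real.sin φ : ℝ) : ℂ) - (-Complex.I * (z : ℂ) * (Real.cos φ : ℂ))
        = Complex.I * (z : ℂ) * Complex.exp (-(ε * φ) * Complex.I) := by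
      rcases hε with h | h <;> subst h <;>
        simp only [one_mul, neg_one_mul, neg_neg, Complex.exp_mul_I,
          Complex.cos_neg, Complex.sin_neg] <;> push_cast
      · linear_combination (z : ℂ) * Complex.sin (φ : ℂ) * Complex.I_sq
      · linear_combination -(z : ℂ) * Complex.sin (φ : ℂ) * Complex.I_sq
    rw [e1, e2, mul_pow, mul_pow, mul_pow, mul_pow]
    rw [← Complex.exp_nat_mul, ← Complex.exp_nat_mul]
    have hni : (-1 : ℂ) ^ n * Complex.I ^ n = (-Complex.I) ^ n := by
      rw [← mul_pow]; norm_num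
    have hsum : Complex.exp ((n:ℂ) * (ε * φ * Complex.I))
        + Complex.exp ((n:ℂ) * (-(ε * φ) * Complex.I)) = 2 * (Real.cos θ : ℂ) := by
      have hcc : Complex.cos ((n:ℂ) * (ε * φ)) = (Real.cos θ : ℂ) := by
        rcases hε with h | h <;> subst h
        · have : (n:ℂ) * (1 * (φ:ℂ)) = ((((n:ℝ)) * φ : ℝ) : ℂ) := by push_cast; ring
          rw [this, ← Complex.ofReal_cos, hcosn]
        · have : (n:ℂ) * (-1 * (φ:ℂ)) = ((-(((n:ℝ)) * φ) : ℝ) : ℂ) := by push_cast; ring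
          rw [this, ← Complex.ofReal_cos, Real.cos_neg, hcosn]
      rw [Complex.cos] at hcc
      have h1 : (n:ℂ) * (ε * ↑φ * Complex.I) = ((n:ℂ) * (ε * φ)) * Complex.I := by ring
      have h2 : (n:ℂ) * (-(ε * ↑φ) * Complex.I) = -((n:ℂ) * (ε * φ)) * Complex.I := by ring
      rw [h1, h2]
      linear_combination 2 * hcc
    linear_combination
      ((z:ℂ) ^ n * Complex.exp ((n:ℂ) * (-(ε * ↑φ) * Complex.I))) * hni
      + ((-Complex.I) ^ n * (z:ℂ) ^ n) * hsum
  rcases hcase with h | h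
  · have := key 1 (Or.inl rfl)
    simpa [h] using this
  · have := key (-1) (Or.inr rfl)
    rw [h]
    simpa [neg_one_mul] using this
end

section
/- Let n be an odd positive integer, z > 0, θ ∈ (0, π), w = cos θ. The polynomial P_n(s) := 2 ∑_{k=0}^{⌊n/2⌋} C(n,2k) s^{n-2k} (s^2+z^2)^k - 2w(-iz)^n factors as P_n(s) = 2^n ∏_{l=0}^{n-1} (s + iz cos((θ+2πl)/n)). -/
open Polynomial Finset

/-- Even-index binomial extraction: `(a+b)^n + (a-b)^n = 2 ∑ C(n,2k) a^(n-2k) (b²)^k`. -/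
lemma binom_even (n : ℕ) (a b : ℂ) :
    (a + b) ^ n + (a - b) ^ n
      = 2 * ∑ k ∈ Finset.range (n / 2 + 1),
          (n.choose (2 * k) : ℂ) * a ^ (n - 2 * k) * (b ^ 2) ^ k := by
  rw [add_pow, sub_eq_add_neg, add_pow, ← Finset.sum_add_distrib]
  have h1 : ∀ k ∈ Finset.range (n + 1),
      a ^ k * b ^ (n - k) * (n.choose k : ℂ) + a ^ k * (-b) ^ (n - k) * (n.choose k : ℂ)
        = if Even (n - k) then 2 * (a ^ k * b ^ (n - k) * (n.choose k : ℂ)) else 0 := by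
    intro k _
    by_cases h : Even (n - k)
    · rw [if_pos h, h.neg_pow]; ring
    · rw [if_neg h, (Nat.not_even_iff_odd.mp h).neg_pow]; ring
  rw [Finset.sum_congr rfl h1, ← Finset.sum_filter, Finset.mul_sum]
  refine Finset.sum_nbij' (fun k => (n - k) / 2) (fun j => n - 2 * j) ?_ ?_ ?_ ?_ ?_
  · intro k hk
    simp only [Finset.mem_filter, Finset.mem_range] at hk ⊢
    exact Nat.lt_succ_of_le (Nat.div_le_div_right (Nat.sub_le n k))
  · intro j hj
    simp only [Finset.mem_range] at hj
    have h2j : 2 * j ≤ n := by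
      have := Nat.lt_succ_iff.mp hj
      calc 2 * j ≤ 2 * (n / 2) := by omega
        _ ≤ n := Nat.mul_div_le n 2
    simp only [Finset.mem_filter, Finset.mem_range]
    refine ⟨by omega, ?_⟩
    rw [Nat.sub_sub_self h2j]; exact even_two_mul j
  · intro k hk
    simp only [Finset.mem_filter, Finset.mem_range] at hk
    obtain ⟨hkn, ⟨e, he⟩⟩ := hk
    omega
  · intro j hj
    simp only [Finset.mem_range] at hj
    have h2j : 2 * j ≤ n := by
      have := Nat.lt_succ_iff.mp hj
      calc 2 * j ≤ 2 * (n / 2) := by omega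
        _ ≤ n := Nat.mul_div_le n 2
    rw [Nat.sub_sub_self h2j]
    omega
  · intro k hk
    simp only [Finset.mem_filter, Finset.mem_range] at hk
    obtain ⟨hkn, ⟨e, he⟩⟩ := hk
    have hkn' : k ≤ n := Nat.lt_succ_iff.mp hkn
    have h2' : 2 * ((n - k) / 2) = n - k := by omega
    rw [h2', Nat.sub_sub_self hkn', Nat.choose_symm hkn', ← pow_mul, h2']
    ring

/-- Factorization of `P_n(s) = 2 ∑_{k=0}^{⌊n/2⌋} C(n,2k) s^{n-2k} (s²+z²)^k - 2w(-iz)^n`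
as `2^n ∏_{l=0}^{n-1} (s + iz cos((θ+2πl)/n))`. -/
theorem Pn_factorization (n : ℕ) (hodd : Odd n) (hn : 0 < n) (z θ : ℝ) (hz : 0 < z)
    (hθ : θ ∈ Set.Ioo 0 Real.pi) (s : ℂ) :
    2 * (∑ k ∈ Finset.range (n / 2 + 1),
        (n.choose (2 * k) : ℂ) * s ^ (n - 2 * k) * (s ^ 2 + (z : ℂ) ^ 2) ^ k)
      - 2 * (Real.cos θ : ℂ) * (-Complex.I * (z : ℂ)) ^ n
    = 2 ^ n * ∏ l ∈ Finset.range n,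
        (s + Complex.I * (z : ℂ) * (Real.cos ((θ + 2 * Real.pi * l) / n) : ℝ)) := by
  obtain ⟨hθ0, hθπ⟩ := hθ
  have hπ := Real.pi_pos
  have hn' : (0:ℝ) < (n:ℝ) := by exact_mod_cast hn
  set φ : ℕ → ℝ := fun l => (θ + 2 * Real.pi * l) / n with hφ
  set r : ℕ → ℂ := fun l => -(Complex.I * (z:ℂ) * ((Real.cos (φ l) : ℝ) : ℂ)) with hr
  set Q : ℂ[X] := C 2 * (∑ k ∈ Finset.range (n / 2 + 1),
      C ((n.choose (2 * k) : ℂ)) * X ^ (n - 2 * k) * (X ^ 2 + C ((z:ℂ) ^ 2)) ^ k)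
      - C (2 * ((Real.cos θ : ℝ) : ℂ) * (-Complex.I * (z:ℂ)) ^ n) with hQ
  set R : ℂ[X] := C ((2:ℂ) ^ n) * ∏ l ∈ Finset.range n, (X - C (r l)) with hR
  have hnφ : ∀ l : ℕ, (n : ℝ) * φ l = θ + 2 * Real.pi * l := by
    intro l; rw [hφ]; field_simp
  have hcosn : ∀ l : ℕ, Real.cos ((n : ℝ) * φ l) = Real.cos θ := by
    intro l
    rw [hnφ]
    have h : θ + 2 * Real.pi * l = θ + (l : ℤ) * (2 * Real.pi) := by push_cast; ring
    rw [h, Real.cos_add_int_mul_two_pi]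
  -- roots of Q
  have hrootQ : ∀ l : ℕ, Q.eval (r l) = 0 := by
    intro l
    have hb : (r l) ^ 2 + ((z:ℂ))^2 = ((z:ℂ) * ((Real.sin (φ l) : ℝ) : ℂ)) ^ 2 := by
      have h1 : ((Real.sin (φ l) : ℝ) : ℂ) ^ 2 + ((Real.cos (φ l) : ℝ) : ℂ) ^ 2 = 1 := by
        exact_mod_cast congrArg (fun t : ℝ => (t : ℂ)) (Real.sin_sq_add_cos_sq (φ l))
      rw [hr]
      linear_combination ((z:ℂ)^2 * ((Real.cos (φ l):ℝ):ℂ)^2) * Complex.I_sq - (z:ℂ)^2 * h1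
    rw [hQ]
    simp only [eval_sub, eval_mul, eval_C, eval_finset_sum, eval_pow, eval_add, eval_X]
    simp only [hb]
    rw [← binom_even n (r l) ((z:ℂ) * ((Real.sin (φ l) : ℝ) : ℂ))]
    have h1 : r l + (z:ℂ) * ((Real.sin (φ l) : ℝ) : ℂ)
        = -Complex.I * (z:ℂ) * Complex.exp (((φ l : ℝ) : ℂ) * Complex.I) := by
      rw [Complex.exp_mul_I, ← Complex.ofReal_cos, ← Complex.ofReal_sin, hr]
      linear_combination ((z:ℂ) * ((Real.sin (φ l):ℝ):ℂ)) * Complex.I_sq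
    have h2 : r l - (z:ℂ) * ((Real.sin (φ l) : ℝ) : ℂ)
        = -Complex.I * (z:ℂ) * Complex.exp (-((φ l : ℝ) : ℂ) * Complex.I) := by
      rw [Complex.exp_mul_I, Complex.cos_neg, Complex.sin_neg, ← Complex.ofReal_cos,
        ← Complex.ofReal_sin, hr]
      linear_combination (-(z:ℂ) * ((Real.sin (φ l):ℝ):ℂ)) * Complex.I_sq
    rw [h1, h2]
    simp only [mul_pow, ← Complex.exp_nat_mul]
    have hcc : Complex.exp ((n:ℂ) * (((φ l : ℝ) : ℂ) * Complex.I))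
        + Complex.exp ((n:ℂ) * (-((φ l : ℝ) : ℂ) * Complex.I)) = 2 * ((Real.cos θ : ℝ) : ℂ) := by
      have e1 : (n:ℂ) * (((φ l : ℝ) : ℂ) * Complex.I) = (((n : ℝ) * φ l : ℝ) : ℂ) * Complex.I := by
        push_cast; ring
      have e2 : (n:ℂ) * (-((φ l : ℝ) : ℂ) * Complex.I)
          = (-(((n : ℝ) * φ l : ℝ) : ℂ)) * Complex.I := by
        push_cast; ring
      rw [e1, e2, Complex.exp_mul_I, Complex.exp_mul_I, Complex.cos_neg, Complex.sin_neg,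
        ← Complex.ofReal_cos, hcosn l]
      ring
    linear_combination ((-Complex.I)^n * (z:ℂ)^n) * hcc
  have hrootR : ∀ l ∈ Finset.range n, R.eval (r l) = 0 := by
    intro l hl
    rw [hR]
    simp only [eval_mul, eval_C, eval_prod, eval_sub, eval_X]
    rw [Finset.prod_eq_zero hl (by simp)]
    simp
  -- injectivity of the roots
  have hcos_inj : ∀ l m : Fin n, Real.cos (φ l) = Real.cos (φ m) → l = m := by
    intro l m h
    have hl1 : (l:ℤ) < n := by exact_mod_cast l.isLt
    have hm1 : (m:ℤ) < n := by exact_mod_cast m.isLt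
    have hl0 : (0:ℤ) ≤ (l:ℤ) := by positivity
    have hm0 : (0:ℤ) ≤ (m:ℤ) := by positivity
    have hnz : (0:ℤ) < (n:ℤ) := by exact_mod_cast hn
    rcases Real.cos_eq_cos_iff.mp h with ⟨k, hk | hk⟩
    · -- φ m = 2kπ + φ l
      rw [hφ] at hk
      simp only at hk
      field_simp at hk
      have hm' : 2 * Real.pi * (m:ℝ) = 2 * Real.pi * ((k:ℝ) * n + (l:ℝ)) := by
        linear_combination hk
      have hm2 : (m:ℝ) = (k:ℝ) * n + (l:ℝ) :=
        mul_left_cancel₀ (by positivity) hm'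
      have hmz : (m:ℤ) = k * n + (l:ℤ) := by exact_mod_cast hm2
      have hk0 : k = 0 := by
        by_contra hne
        rcases lt_or_gt_of_ne hne with hlt | hgt
        · have h7 : k ≤ -1 := by omega
          have h8 : k * (n:ℤ) ≤ -1 * (n:ℤ) := mul_le_mul_of_nonneg_right h7 hnz.le
          linarith
        · have h7 : (1:ℤ) ≤ k := by omega
          have h8 : (1:ℤ) * (n:ℤ) ≤ k * (n:ℤ) := mul_le_mul_of_nonneg_right h7 hnz.le
          linarith
      have : (m:ℤ) = (l:ℤ) := by rw [hk0] at hmz; simpa using hmz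
      have : (m:ℕ) = (l:ℕ) := by exact_mod_cast this
      exact (Fin.ext this).symm
    · -- φ m = 2kπ - φ l : impossible
      exfalso
      rw [hφ] at hk
      simp only at hk
      field_simp at hk
      have hθeq : θ = Real.pi * ((k:ℝ) * n - (m:ℝ) - (l:ℝ)) := by
        linear_combination hk / 2
      have hjr : ((k * n - (m:ℤ) - (l:ℤ) : ℤ) : ℝ) = (k:ℝ) * n - (m:ℝ) - (l:ℝ) := by
        push_cast; ring
      have hjpos : (0:ℤ) < k * n - (m:ℤ) - (l:ℤ) := by
        by_contra hle
        push_neg at hle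
        have h8 : ((k * n - (m:ℤ) - (l:ℤ) : ℤ) : ℝ) ≤ 0 := by exact_mod_cast hle
        rw [hjr] at h8
        nlinarith
      have h9 : (1:ℝ) ≤ ((k * n - (m:ℤ) - (l:ℤ) : ℤ) : ℝ) := by exact_mod_cast hjpos
      rw [hjr] at h9
      nlinarith
  have hinj : Function.Injective (fun l : Fin n => r (l:ℕ)) := by
    intro l m h
    apply hcos_inj
    have hIz : (Complex.I * (z:ℂ)) ≠ 0 := by
      simp [Complex.I_ne_zero, Complex.ofReal_ne_zero.mpr hz.ne']
    simp only [hr, neg_inj] at h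
    have h' := mul_left_cancel₀ hIz h
    exact_mod_cast h'
  -- degrees and leading coefficients
  have hk2 : ∀ k ∈ Finset.range (n / 2 + 1), 2 * k ≤ n := by
    intro k hk
    have := Finset.mem_range.mp hk
    calc 2 * k ≤ 2 * (n / 2) := by omega
      _ ≤ n := Nat.mul_div_le n 2
  have h2sum : 2 * ∑ k ∈ Finset.range (n / 2 + 1), ((n.choose (2 * k) : ℂ)) = 2 ^ n := by
    have h := binom_even n 1 1
    rw [show (1:ℂ) + 1 = 2 by norm_num, sub_self, zero_pow hn.ne', add_zero] at h
    simpa using h.symm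
  have hQdeg : Q.natDegree ≤ n := by
    rw [hQ]
    refine le_trans (natDegree_sub_le _ _) (max_le ?_ ((natDegree_C _).le.trans (Nat.zero_le n)))
    refine le_trans natDegree_mul_le ?_
    rw [natDegree_C, zero_add]
    apply natDegree_sum_le_of_forall_le
    intro k hk
    refine le_trans natDegree_mul_le ?_
    have hA : (C ((n.choose (2 * k) : ℂ)) * X ^ (n - 2 * k)).natDegree ≤ n - 2 * k :=
      le_trans natDegree_mul_le (by simp)
    have hB : ((X ^ 2 + C ((z:ℂ) ^ 2)) ^ k).natDegree ≤ 2 * k := by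
      refine le_trans natDegree_pow_le ?_
      rw [natDegree_X_pow_add_C]
      omega
    have := hk2 k hk
    omega
  have hQcoeff : Q.coeff n = 2 ^ n := by
    rw [hQ]
    rw [coeff_sub, coeff_C, if_neg hn.ne', sub_zero, coeff_C_mul, finset_sum_coeff]
    have hterm : ∀ k ∈ Finset.range (n / 2 + 1),
        (C ((n.choose (2 * k) : ℂ)) * X ^ (n - 2 * k) * (X ^ 2 + C ((z:ℂ) ^ 2)) ^ k).coeff n
          = (n.choose (2 * k) : ℂ) := by
      intro k hk
      have h2k := hk2 k hk
      have hmonic : ((X ^ 2 + C ((z:ℂ) ^ 2)) ^ k).Monic :=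
        (monic_X_pow_add_C _ (by norm_num)).pow k
      have hdeg : ((X ^ 2 + C ((z:ℂ) ^ 2)) ^ k).natDegree = 2 * k := by
        rw [natDegree_pow, natDegree_X_pow_add_C]; ring
      have hc := coeff_X_pow_mul ((X ^ 2 + C ((z:ℂ) ^ 2)) ^ k) (n - 2 * k) (2 * k)
      rw [Nat.add_sub_cancel' h2k] at hc
      have hlead := hmonic.coeff_natDegree
      rw [hdeg] at hlead
      rw [mul_assoc, coeff_C_mul, hc, hlead, mul_one]
    rw [Finset.sum_congr rfl hterm]
    exact h2sum
  have hmonicP : (∏ l ∈ Finset.range n, (X - C (r l))).Monic :=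
    monic_prod_of_monic _ _ (fun l _ => monic_X_sub_C _)
  have hdegP : (∏ l ∈ Finset.range n, (X - C (r l))).natDegree = n := by
    rw [natDegree_prod_of_monic _ _ (fun l _ => monic_X_sub_C _)]
    simp
  have hRdeg : R.natDegree ≤ n := by
    rw [hR]; exact le_trans (natDegree_C_mul_le _ _) (le_of_eq hdegP)
  have hRcoeff : R.coeff n = 2 ^ n := by
    rw [hR, coeff_C_mul]
    have hlead := hmonicP.coeff_natDegree
    rw [hdegP] at hlead
    rw [hlead, mul_one]
  -- conclude Q = R
  have hQR : Q = R := by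
    rw [← sub_eq_zero]
    rcases eq_or_ne (Q - R) 0 with h0 | h0
    · exact h0
    apply Polynomial.eq_zero_of_natDegree_lt_card_of_eval_eq_zero (Q - R) hinj
    · intro l
      simp [eval_sub, hrootQ (l:ℕ), hrootR (l:ℕ) (Finset.mem_range.mpr l.isLt)]
    · rw [Fintype.card_fin]
      have hle : (Q - R).natDegree ≤ n := le_trans (natDegree_sub_le _ _) (max_le hQdeg hRdeg)
      rcases lt_or_eq_of_le hle with h | h
      · exact h
      · exfalso
        apply h0
        have hlc : (Q - R).leadingCoeff = 0 := by
          rw [leadingCoeff, h, coeff_sub, hQcoeff, hRcoeff, sub_self]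
        exact leadingCoeff_eq_zero.mp hlc
  have heval := congrArg (eval s) hQR
  simp only [hQ, hR, eval_sub, eval_mul, eval_C, eval_finset_sum, eval_pow, eval_add, eval_X,
    eval_prod, hr, sub_neg_eq_add] at heval
  exact heval
end

section
/- Let ñ be an odd positive integer and z > 0. The polynomial O_{ñ-1}(s) := -2 ∑_{k=0}^{⌊ñ/2⌋} C(ñ, 2k+1) s^{ñ-2k-1} (s^2+z^2)^k factors as O_{ñ-1}(s) = -2^ñ ∏_{l=1}^{ñ-1} (s - iz cos(lπ/ñ)). -/
open Finset Polynomial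


lemma sum_range_even_odd {M : Type*} [AddCommMonoid M] (g : ℕ → M) (n : ℕ) :
    ∑ k ∈ Finset.range (2*n), g k = ∑ t ∈ Finset.range n, (g (2*t) + g (2*t+1)) := by
  induction n with
  | zero => simp
  | succ n ih =>
      rw [show 2*(n+1) = 2*n+1+1 by ring, Finset.sum_range_succ, Finset.sum_range_succ, ih,
        Finset.sum_range_succ, add_assoc]

lemma key (m : ℕ) (a b : ℂ) :
    (a+b)^(2*m+1) - (a-b)^(2*m+1)
      = 2 * ∑ k ∈ Finset.range (m+1), ((2*m+1).choose (2*k+1) : ℂ) * a^(2*m-2*k) * b^(2*k+1) := by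
  rw [add_pow, sub_eq_add_neg a b, add_pow, ← Finset.sum_sub_distrib,
    show 2*m+1+1 = 2*(m+1) by ring, sum_range_even_odd, Finset.mul_sum]
  rw [← Finset.sum_range_reflect]
  refine Finset.sum_congr rfl fun t ht => ?_
  rw [Finset.mem_range] at ht
  simp only [Nat.add_sub_cancel]
  have h1 : 2*m+1 - 2*(m-t) = 2*t+1 := by omega
  have h2 : 2*m+1 - (2*(m-t)+1) = 2*t := by omega
  have h3 : (2*m+1).choose (2*(m-t)) = (2*m+1).choose (2*t+1) := by
    rw [show 2*(m-t) = 2*m+1 - (2*t+1) by omega, Nat.choose_symm (by omega)]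
  have h4 : 2*(m-t) = 2*m - 2*t := by omega
  rw [h1, h2, h3, h4]
  have hodd : Odd (2*t+1) := ⟨t, by ring⟩
  have heven : Even (2*t) := ⟨t, by ring⟩
  rw [hodd.neg_pow, heven.neg_pow]
  ring

lemma eval_zero (m l : ℕ) (z : ℝ) (hz : 0 < z) (hl1 : 1 ≤ l) (hl2 : l ≤ 2*m) :
    ∑ k ∈ Finset.range (m+1), ((2*m+1).choose (2*k+1) : ℂ) *
      (Complex.I*(z:ℂ)*((Real.cos (l*Real.pi/(2*m+1)) : ℝ):ℂ))^(2*m-2*k) *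
      ((Complex.I*(z:ℂ)*((Real.cos (l*Real.pi/(2*m+1)) : ℝ):ℂ))^2 + (z:ℂ)^2)^k = 0 := by
  set θ : ℝ := l*Real.pi/(2*m+1) with hθ
  set a : ℂ := Complex.I*(z:ℂ)*((Real.cos θ : ℝ):ℂ) with ha
  set b : ℂ := ((z*Real.sin θ : ℝ):ℂ) with hb
  have hθpos : 0 < θ := by
    apply div_pos
    · have : (0:ℝ) < l := by exact_mod_cast hl1
      positivity
    · positivity
  have hθlt : θ < Real.pi := by
    rw [hθ, div_lt_iff₀ (by positivity)]
    have hl : (l:ℝ) < 2*(m:ℝ)+1 := by exact_mod_cast Nat.lt_succ_of_le hl2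
    nlinarith [Real.pi_pos]
  have hsin : 0 < Real.sin θ := Real.sin_pos_of_pos_of_lt_pi hθpos hθlt
  have hbne : b ≠ 0 := by
    simp only [hb, ne_eq, Complex.ofReal_eq_zero]
    positivity
  have hsq : a^2 + (z:ℂ)^2 = b^2 := by
    rw [ha, hb, Complex.ofReal_mul, Complex.ofReal_cos, Complex.ofReal_sin]
    have h' : Complex.sin θ ^ 2 + Complex.cos θ ^ 2 = 1 := Complex.sin_sq_add_cos_sq _
    linear_combination (-(z:ℂ)^2) * h' + (z:ℂ)^2 * (Complex.cos (θ:ℂ))^2 * Complex.I_sq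
  have hab : a + b = Complex.I * z * Complex.exp (-(θ:ℂ) * Complex.I) := by
    rw [Complex.exp_mul_I, Complex.cos_neg, Complex.sin_neg, ← Complex.ofReal_cos,
      ← Complex.ofReal_sin, ha, hb, Complex.ofReal_mul]
    linear_combination (z:ℂ)*(Real.sin θ:ℂ)*Complex.I_sq
  have hab' : a - b = Complex.I * z * Complex.exp ((θ:ℂ) * Complex.I) := by
    rw [Complex.exp_mul_I, ← Complex.ofReal_cos, ← Complex.ofReal_sin, ha, hb, Complex.ofReal_mul]
    linear_combination (-(z:ℂ)*(Real.sin θ:ℂ))*Complex.I_sq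
  have hexp : ∀ c : ℂ, Complex.exp (c*Complex.I) ^ (2*m+1)
      = Complex.exp (((2*m+1:ℕ):ℂ)*c*Complex.I) := by
    intro c
    rw [← Complex.exp_nat_mul]
    ring_nf
  have hne : (2*(m:ℝ)+1) ≠ 0 := by positivity
  have hr : ((2*m+1:ℕ):ℝ) * θ = (l:ℝ) * Real.pi := by
    rw [hθ]
    push_cast
    field_simp
  have hnθ : ((2*m+1:ℕ):ℂ) * (θ:ℂ) = (l:ℂ) * (Real.pi:ℂ) := by exact_mod_cast congrArg Complex.ofReal hr
  push_cast at hnθ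
  have hpow : (a+b)^(2*m+1) - (a-b)^(2*m+1) = 0 := by
    rw [hab, hab', mul_pow, mul_pow, mul_pow, mul_pow, hexp, hexp]
    have e1 : ((2*m+1:ℕ):ℂ) * (-(θ:ℂ)) * Complex.I = (l:ℕ) * (-(Real.pi:ℂ) * Complex.I) := by
      push_cast
      linear_combination -Complex.I * hnθ
    have e2 : ((2*m+1:ℕ):ℂ) * (θ:ℂ) * Complex.I = (l:ℕ) * ((Real.pi:ℂ) * Complex.I) := by
      push_cast
      linear_combination Complex.I * hnθ
    rw [e1, e2, Complex.exp_nat_mul, Complex.exp_nat_mul]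
    have g1 : Complex.exp (-(Real.pi:ℂ) * Complex.I) = -1 := by
      rw [Complex.exp_mul_I, Complex.cos_neg, Complex.sin_neg, ← Complex.ofReal_cos,
        ← Complex.ofReal_sin, Real.cos_pi, Real.sin_pi]
      norm_num
    have g2 : Complex.exp ((Real.pi:ℂ) * Complex.I) = -1 := by
      rw [Complex.exp_mul_I, ← Complex.ofReal_cos, ← Complex.ofReal_sin, Real.cos_pi, Real.sin_pi]
      norm_num
    rw [g1, g2]
    ring
  have hkey := key m a b
  rw [hpow] at hkey
  have h2 : (2*b) * (∑ k ∈ Finset.range (m+1),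
      ((2*m+1).choose (2*k+1) : ℂ) * a^(2*m-2*k) * (a^2 + (z:ℂ)^2)^k) = 0 := by
    rw [Finset.mul_sum]
    rw [show (0:ℂ) = 2 * ∑ k ∈ Finset.range (m+1),
      ((2*m+1).choose (2*k+1) : ℂ) * a^(2*m-2*k) * b^(2*k+1) from hkey, Finset.mul_sum]
    refine Finset.sum_congr rfl fun k _ => ?_
    rw [hsq, ← pow_mul, pow_succ]
    ring
  have h2b : (2*b) ≠ 0 := mul_ne_zero two_ne_zero hbne
  exact (mul_eq_zero.mp h2).resolve_left h2b

/-- For `nt` odd, `O_{nt-1}(s) = -2 ∑_{k} C(nt,2k+1) s^{nt-2k-1}(s²+z²)^k` factors as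
`-2^nt ∏_{l=1}^{nt-1} (s - iz cos(lπ/nt))`. -/
theorem On_factorization (nt : ℕ) (hodd : Odd nt) (hn : 0 < nt) (z : ℝ) (hz : 0 < z) (s : ℂ) :
    -2 * ∑ k ∈ Finset.range (nt / 2 + 1),
        (nt.choose (2 * k + 1) : ℂ) * s ^ (nt - 2 * k - 1) * (s ^ 2 + (z : ℂ) ^ 2) ^ k
    = -(2 : ℂ) ^ nt * ∏ l ∈ Finset.Icc 1 (nt - 1),
        (s - Complex.I * (z : ℂ) * (Real.cos (l * Real.pi / nt) : ℝ)) := by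
  obtain ⟨m, rfl⟩ := hodd
  set r : ℕ → ℂ := fun l => Complex.I * (z:ℂ) * ((Real.cos (l * Real.pi / ((2*m+1:ℕ):ℝ)) : ℝ) : ℂ)
    with hr
  set P : Polynomial ℂ := ∑ k ∈ Finset.range (m+1),
      Polynomial.C (((2*m+1).choose (2*k+1)) : ℂ) * Polynomial.X^(2*m-2*k)
        * (Polynomial.X^2 + Polynomial.C ((z:ℂ)^2))^k with hP
  set Q : Polynomial ℂ := ∏ l ∈ Finset.Icc 1 (2*m), (Polynomial.X - Polynomial.C (r l)) with hQ
  -- monicity and degrees of the summands of P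
  have hTmonic : ∀ k, (Polynomial.X^(2*m-2*k) * (Polynomial.X^2 + Polynomial.C ((z:ℂ)^2))^k).Monic :=
    fun k => (monic_X_pow _).mul ((monic_X_pow_add_C _ two_ne_zero).pow k)
  have hTdeg : ∀ k ≤ m,
      (Polynomial.X^(2*m-2*k) * (Polynomial.X^2 + Polynomial.C ((z:ℂ)^2))^k).natDegree = 2*m := by
    intro k hk
    rw [(monic_X_pow _).natDegree_mul ((monic_X_pow_add_C _ two_ne_zero).pow k),
      natDegree_X_pow, natDegree_pow, natDegree_X_pow_add_C]
    omega
  -- the odd binomial sum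
  have hchoose : ∑ k ∈ Finset.range (m+1), (((2*m+1).choose (2*k+1)) : ℂ) = 2^(2*m) := by
    have h := key m 1 1
    simp only [one_pow, mul_one] at h
    norm_num at h
    rw [pow_succ, mul_comm ((2:ℂ)^(2*m)) 2] at h
    exact (mul_left_cancel₀ two_ne_zero h).symm
  have hPcoeff : P.coeff (2*m) = 2^(2*m) := by
    rw [hP, finset_sum_coeff]
    rw [← hchoose]
    refine Finset.sum_congr rfl fun k hk => ?_
    rw [Finset.mem_range] at hk
    rw [mul_assoc, coeff_C_mul]
    have := (hTmonic k).coeff_natDegree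
    rw [hTdeg k (by omega)] at this
    rw [this, mul_one]
  have hPdeg : P.natDegree ≤ 2*m := by
    refine (natDegree_sum_le _ _).trans ?_
    rw [Finset.fold_max_le]
    refine ⟨by omega, fun k hk => ?_⟩
    rw [Finset.mem_range] at hk
    calc (Polynomial.C (((2*m+1).choose (2*k+1)) : ℂ) * Polynomial.X^(2*m-2*k)
        * (Polynomial.X^2 + Polynomial.C ((z:ℂ)^2))^k).natDegree
        ≤ _ := natDegree_mul_le
      _ ≤ 2*m := by
          have b1 : (Polynomial.C (((2*m+1).choose (2*k+1)) : ℂ)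
              * Polynomial.X^(2*m-2*k)).natDegree ≤ 2*m-2*k :=
            natDegree_mul_le.trans (by simp)
          have b2 : ((Polynomial.X^2 + Polynomial.C ((z:ℂ)^2))^k).natDegree = k*2 := by
            rw [natDegree_pow, natDegree_X_pow_add_C]
          omega
  -- Q facts
  have hQmonic : Q.Monic := monic_prod_of_monic _ _ fun l _ => monic_X_sub_C _
  have hQdeg : Q.natDegree = 2*m := by
    rw [hQ, natDegree_prod_of_monic _ _ fun l _ => monic_X_sub_C _]
    simp [natDegree_X_sub_C]
  have hQcoeff : Q.coeff (2*m) = 1 := by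
    have := hQmonic.coeff_natDegree
    rwa [hQdeg] at this
  -- roots of P
  have hPeval : ∀ l ∈ Finset.Icc 1 (2*m), P.eval (r l) = 0 := by
    intro l hl
    rw [Finset.mem_Icc] at hl
    have h0 := eval_zero m l z hz hl.1 hl.2
    rw [hP]
    simp only [eval_finset_sum, eval_mul, eval_pow, eval_C, eval_X, eval_add]
    rw [← h0]
    refine Finset.sum_congr rfl fun k _ => ?_
    have harg : ((2*m+1:ℕ):ℝ) = 2*(m:ℝ)+1 := by push_cast; ring
    rw [hr]
    simp only [harg]
  -- injectivity of the roots
  have hinj : Set.InjOn r (Finset.Icc 1 (2*m)) := by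
    intro l1 hl1 l2 hl2 heq
    simp only [Finset.coe_Icc, Set.mem_Icc] at hl1 hl2
    have hIz : Complex.I * (z:ℂ) ≠ 0 :=
      mul_ne_zero Complex.I_ne_zero (by exact_mod_cast hz.ne')
    rw [hr] at heq
    simp only [mul_assoc] at heq
    have hcos : Real.cos ((l1:ℝ) * Real.pi / ((2*m+1:ℕ):ℝ))
        = Real.cos ((l2:ℝ) * Real.pi / ((2*m+1:ℕ):ℝ)) := by
      have h1 := mul_left_cancel₀ Complex.I_ne_zero heq
      have h2 := mul_left_cancel₀ (show (z:ℂ) ≠ 0 by exact_mod_cast hz.ne') h1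
      exact_mod_cast h2
    have hmem : ∀ l : ℕ, l ≤ 2*m → (l:ℝ) * Real.pi / ((2*m+1:ℕ):ℝ) ∈ Set.Icc 0 Real.pi := by
      intro l hl
      constructor
      · positivity
      · rw [div_le_iff₀ (by positivity)]
        have : (l:ℝ) ≤ ((2*m+1:ℕ):ℝ) := by exact_mod_cast Nat.le_succ_of_le hl
        nlinarith [Real.pi_pos]
    have := Real.injOn_cos (hmem l1 hl1.2) (hmem l2 hl2.2) hcos
    have hden : ((2*m+1:ℕ):ℝ) ≠ 0 := by positivity
    have h4 : (l1:ℝ)*Real.pi = (l2:ℝ)*Real.pi := by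
      have h6 : (l1:ℝ)*Real.pi / ((2*m+1:ℕ):ℝ) * ((2*m+1:ℕ):ℝ)
          = (l2:ℝ)*Real.pi/((2*m+1:ℕ):ℝ) * ((2*m+1:ℕ):ℝ) := by rw [this]
      rwa [div_mul_cancel₀ _ hden, div_mul_cancel₀ _ hden] at h6
    have h5 := mul_right_cancel₀ Real.pi_ne_zero h4
    exact_mod_cast h5
  -- the difference polynomial vanishes
  have hPQ : P = Polynomial.C ((2:ℂ)^(2*m)) * Q := by
    have hD0 : P - Polynomial.C ((2:ℂ)^(2*m)) * Q = 0 := by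
      set D := P - Polynomial.C ((2:ℂ)^(2*m)) * Q with hD
      rcases eq_or_ne D 0 with h | h
      · exact h
      have hDcoeff : D.coeff (2*m) = 0 := by
        rw [hD, coeff_sub, coeff_C_mul, hPcoeff, hQcoeff, mul_one, sub_self]
      have hDdeg : D.natDegree ≤ 2*m :=
        (natDegree_sub_le _ _).trans (max_le hPdeg ((natDegree_C_mul_le _ _).trans hQdeg.le))
      have hDlt : D.natDegree < 2*m := by
        rcases lt_or_eq_of_le hDdeg with h' | h'
        · exact h'
        · have hlc : D.leadingCoeff = 0 := by
            rw [Polynomial.leadingCoeff, h']; exact hDcoeff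
          exact absurd hlc (leadingCoeff_ne_zero.mpr h)
      have hcard : ((Finset.Icc 1 (2*m)).image r).card = 2*m := by
        rw [Finset.card_image_of_injOn hinj, Nat.card_Icc]
        omega
      refine Polynomial.eq_zero_of_natDegree_lt_card_of_eval_eq_zero' D
        ((Finset.Icc 1 (2*m)).image r) ?_ (by rw [hcard]; exact hDlt)
      intro x hx
      obtain ⟨l, hl, rfl⟩ := Finset.mem_image.mp hx
      rw [hD, eval_sub, eval_mul, eval_C, hPeval l hl]
      rw [hQ, eval_prod]
      rw [Finset.prod_eq_zero hl (by simp)]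
      ring
    linear_combination hD0
  -- conclude
  rw [show (2*m+1)/2 = m from by omega, show 2*m+1-1 = 2*m from by omega]
  have e1 : (∑ k ∈ Finset.range (m+1),
      (((2*m+1).choose (2*k+1)):ℂ) * s^(2*m+1-2*k-1) * (s^2+(z:ℂ)^2)^k) = P.eval s := by
    rw [hP]
    simp only [eval_finset_sum, eval_mul, eval_pow, eval_C, eval_X, eval_add]
    refine Finset.sum_congr rfl fun k hk => ?_
    rw [show 2*m+1-2*k-1 = 2*m-2*k from by omega]
  rw [e1, hPQ, eval_mul, eval_C]
  have e2 : Q.eval s = ∏ l ∈ Finset.Icc 1 (2*m), (s - r l) := by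
    simp [hQ, eval_prod]
  rw [e2]
  simp only [hr]
  rw [pow_succ]
  ring
end

section
/- For real numbers α, β > 0 and complex b with |b| < 1, and real s > 1, the Laplace transform of t ↦ t^{β-1} E_{α,β}(b t^α) equals s^{-β}/(1 - b s^{-α}), where E_{α,β}(z) = ∑_{n=0}^∞ z^n / Γ(αn + β) is the two-parameter Mittag-Leffler function. -/
open MeasureTheory Set Real

/-- The two-parameter Mittag-Leffler function `E_{α,β}(z) = ∑ zⁿ/Γ(αn+β)`. -/
noncomputable def mittagLeffler (α β : ℝ) (z : ℂ) : ℂ :=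
  ∑' n : ℕ, z ^ n / Complex.Gamma ((α * n + β : ℝ) : ℂ)

lemma aux_integrableOn (a r : ℝ) (ha : 0 < a) (hr : 0 < r) :
    IntegrableOn (fun t : ℝ => t ^ (a - 1) * rexp (-(r * t))) (Ioi 0) := by
  have h := Real.GammaIntegral_convergent ha
  rw [← mul_zero r, ← integrableOn_Ioi_comp_mul_left_iff _ _ hr] at h
  refine IntegrableOn.congr_fun (h.const_mul (r ^ (a - 1))⁻¹)
    (fun t ht => ?_) measurableSet_Ioi
  have ht' : (0:ℝ) < t := ht
  have hrne : r ^ (a - 1) ≠ 0 := (Real.rpow_pos_of_pos hr _).ne'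
  rw [Real.mul_rpow hr.le ht'.le]
  field_simp

lemma aux_cpow_integral (a r : ℝ) (ha : 0 < a) (hr : 0 < r) :
    (∫ t in Ioi (0:ℝ), Complex.exp (-(r : ℂ) * t) * ((t ^ (a - 1) : ℝ) : ℂ))
      = Complex.Gamma ((a : ℝ) : ℂ) * ((r ^ (-a) : ℝ) : ℂ) := by
  have h := Complex.integral_cpow_mul_exp_neg_mul_Ioi (a := ((a : ℝ) : ℂ))
    (by simpa using ha) hr
  rw [setIntegral_congr_fun measurableSet_Ioi
    (g := fun t : ℝ => (t : ℂ) ^ ((a : ℂ) - 1) * Complex.exp (-((r : ℝ) * t)))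
    (fun t ht => ?_), h]
  · rw [mul_comm]
    congr 1
    rw [show ((1:ℂ)/r) = ((r⁻¹ : ℝ) : ℂ) by push_cast; ring,
      ← Complex.ofReal_cpow (inv_nonneg.mpr hr.le),
      Real.inv_rpow hr.le, ← Real.rpow_neg hr.le]
  · have ht' : (0:ℝ) < t := ht
    rw [mul_comm, Complex.ofReal_cpow ht'.le]
    push_cast
    ring_nf

/-- For `α, β > 0`, `|b| < 1`, and real `s > 1`, the Laplace transform of
`t ↦ t^{β-1} E_{α,β}(b t^α)` equals `s^{-β}/(1 - b s^{-α})`. -/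
theorem laplace_mittagLeffler (α β : ℝ) (hα : 0 < α) (hβ : 0 < β) (b : ℂ)
    (hb : ‖b‖ < 1) (s : ℝ) (hs : 1 < s) :
    ∫ t in Set.Ioi (0 : ℝ),
        Complex.exp (-(s : ℂ) * t) * ((t ^ (β - 1) : ℝ) : ℂ) *
          mittagLeffler α β (b * ((t ^ α : ℝ) : ℂ))
      = (s : ℂ) ^ (-(β : ℂ)) / (1 - b * (s : ℂ) ^ (-(α : ℂ))) := by
  have hs0 : (0:ℝ) < s := lt_trans one_pos hs
  set F : ℕ → ℝ → ℂ := fun n t =>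
    (b ^ n / Complex.Gamma ((α * n + β : ℝ) : ℂ)) *
      (Complex.exp (-(s : ℂ) * t) * ((t ^ (α * n + β - 1) : ℝ) : ℂ)) with hF
  have hc : ∀ n : ℕ, 0 < α * n + β := fun n => by positivity
  have hΓpos : ∀ n : ℕ, 0 < Real.Gamma (α * n + β) := fun n => Real.Gamma_pos_of_pos (hc n)
  have hΓ : ∀ n : ℕ, Complex.Gamma ((α * n + β : ℝ) : ℂ) ≠ 0 := fun n => by
    rw [Complex.Gamma_ofReal]; exact_mod_cast (hΓpos n).ne'
  -- Step 1: integrand as a tsum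
  have h1 : ∀ t ∈ Ioi (0:ℝ),
      Complex.exp (-(s : ℂ) * t) * ((t ^ (β - 1) : ℝ) : ℂ) *
        mittagLeffler α β (b * ((t ^ α : ℝ) : ℂ)) = ∑' n, F n t := by
    intro t ht
    have ht' : (0:ℝ) < t := ht
    rw [mittagLeffler, ← tsum_mul_left]
    refine tsum_congr fun n => ?_
    have h2 : ((t ^ α : ℝ) : ℂ) ^ n = ((t ^ (α * n) : ℝ) : ℂ) := by
      rw [← Complex.ofReal_pow, ← Real.rpow_natCast (t ^ α) n, ← Real.rpow_mul ht'.le]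
    have h3 : (t : ℝ) ^ (α * n + β - 1) = t ^ (β - 1) * t ^ (α * n) := by
      rw [← Real.rpow_add ht']; ring_nf
    rw [mul_pow, h2, hF]
    simp only
    rw [h3]
    push_cast
    field_simp
  rw [setIntegral_congr_fun measurableSet_Ioi h1]
  -- Integrability of each term
  have hInt : ∀ n, IntegrableOn (F n) (Ioi 0) := by
    intro n
    have h := ((aux_integrableOn (α * n + β) s (hc n) hs0).ofReal (𝕜 := ℂ)).const_mul
      (b ^ n / Complex.Gamma ((α * n + β : ℝ) : ℂ))
    refine h.congr (ae_of_all _ fun t => ?_)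
    have he : ((rexp (-(s * t)) : ℝ) : ℂ) = Complex.exp (-(s:ℂ) * t) := by
      rw [Complex.ofReal_exp]; push_cast; ring_nf
    simp only [hF, RCLike.ofReal_mul, Complex.coe_algebraMap]
    rw [he]
    ring
  -- Norm integrals
  have hnorm : ∀ n : ℕ, (∫ t in Ioi (0:ℝ), ‖F n t‖)
      = ‖b‖ ^ n * s ^ (-(α * n + β)) := by
    intro n
    rw [setIntegral_congr_fun measurableSet_Ioi
      (g := fun t : ℝ => (‖b‖ ^ n / Real.Gamma (α * n + β)) *
        (t ^ (α * n + β - 1) * rexp (-(s * t)))) (fun t ht => ?_)]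
    · rw [integral_const_mul, Real.integral_rpow_mul_exp_neg_mul_Ioi (hc n) hs0,
        one_div, Real.inv_rpow hs0.le, ← Real.rpow_neg hs0.le]
      field_simp [(hΓpos n).ne']
    · have ht' : (0:ℝ) < t := ht
      simp only [hF, norm_mul, norm_div, norm_pow, Complex.norm_real, Real.norm_eq_abs,
        Complex.Gamma_ofReal]
      rw [show -(s:ℂ) * t = ((-(s * t) : ℝ) : ℂ) by push_cast; ring, ← Complex.ofReal_exp,
        Complex.norm_real, Real.norm_eq_abs, abs_of_pos (Real.exp_pos _), abs_of_pos (hΓpos n),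
        abs_of_nonneg (Real.rpow_nonneg ht'.le _)]
      ring
  have hsum : Summable fun n => ∫ t in Ioi (0:ℝ), ‖F n t‖ := by
    simp_rw [hnorm]
    refine Summable.of_nonneg_of_le (fun n => by positivity) (fun n => ?_)
      (summable_geometric_of_lt_one (norm_nonneg b) hb)
    calc ‖b‖ ^ n * s ^ (-(α * n + β))
        ≤ ‖b‖ ^ n * 1 := by
          exact mul_le_mul_of_nonneg_left
            (Real.rpow_le_one_of_one_le_of_nonpos hs.le (by nlinarith [hc n]))
            (pow_nonneg (norm_nonneg b) n)
      _ = ‖b‖ ^ n := mul_one _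
  rw [← integral_tsum_of_summable_integral_norm hInt hsum]
  -- Evaluate each term's integral
  have hval : ∀ n : ℕ, (∫ t in Ioi (0:ℝ), F n t)
      = (b * ((s ^ (-α) : ℝ) : ℂ)) ^ n * ((s ^ (-β) : ℝ) : ℂ) := by
    intro n
    rw [hF]
    simp only
    rw [integral_const_mul, aux_cpow_integral _ _ (hc n) hs0]
    have h4 : (s : ℝ) ^ (-(α * n + β)) = (s ^ (-α)) ^ n * s ^ (-β) := by
      rw [← Real.rpow_natCast (s ^ (-α)) n, ← Real.rpow_mul hs0.le,
        ← Real.rpow_add hs0]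
      ring_nf
    rw [h4, mul_pow]
    have hΓ' := hΓ n
    push_cast at hΓ' ⊢
    field_simp
  rw [tsum_congr hval, tsum_mul_right]
  -- Geometric series
  have hx : ‖b * ((s ^ (-α) : ℝ) : ℂ)‖ < 1 := by
    rw [norm_mul, Complex.norm_real, Real.norm_eq_abs,
      abs_of_nonneg (Real.rpow_nonneg hs0.le _)]
    calc ‖b‖ * s ^ (-α)
        ≤ ‖b‖ * 1 := by
          exact mul_le_mul_of_nonneg_left
            (Real.rpow_le_one_of_one_le_of_nonpos hs.le (by linarith))
            (norm_nonneg b)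
      _ = ‖b‖ := mul_one _
      _ < 1 := hb
  rw [tsum_geometric_of_norm_lt_one hx]
  rw [Complex.ofReal_cpow hs0.le, Complex.ofReal_cpow hs0.le]
  push_cast
  rw [inv_mul_eq_div]
end

section
/- For real α, β > 0, δ ∈ ℂ, complex b, and real s with s > max(|b|^{1/α}, 0), the Laplace transform of t ↦ t^{β-1} E^δ_{α,β}(b t^α) equals s^{-β} (1 - b s^{-α})^{-δ}, where E^δ_{α,β}(z) = ∑_{n=0}^∞ (δ)_n z^n / (Γ(αn+β) n!) is the Prabhakar generalized Mittag-Leffler function and (δ)_n is the rising Pochhammer symbol. -/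
open Finset MeasureTheory Set Metric Filter

namespace LapPrab


noncomputable def P (δ : ℂ) (n : ℕ) : ℂ := ∏ j ∈ Finset.range n, (δ + j)

lemma P_succ (δ : ℂ) (n : ℕ) : P δ (n + 1) = P δ n * (δ + n) := Finset.prod_range_succ _ _

lemma P_zero (δ : ℂ) : P δ 0 = 1 := rfl

noncomputable def Q (c : ℝ) (n : ℕ) : ℝ := ∏ j ∈ Finset.range n, (c + 1 + j)

lemma Q_pos {c : ℝ} (hc : 0 ≤ c) (n : ℕ) : 0 < Q c n :=
  Finset.prod_pos fun j _ => by positivity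

lemma P_norm_le (δ : ℂ) (n : ℕ) : ‖P δ n‖ ≤ Q ‖δ‖ n := by
  rw [P, Q]
  calc ‖∏ j ∈ range n, (δ + (j : ℂ))‖ = ∏ j ∈ range n, ‖δ + (j : ℂ)‖ := norm_prod _ _
    _ ≤ ∏ j ∈ range n, (‖δ‖ + 1 + j) := by
        refine Finset.prod_le_prod (fun j _ => norm_nonneg _) fun j _ => ?_
        calc ‖δ + (j : ℂ)‖ ≤ ‖δ‖ + ‖(j : ℂ)‖ := norm_add_le _ _
          _ = ‖δ‖ + j := by simp
          _ ≤ ‖δ‖ + 1 + j := by linarith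

/-- master positive series -/
noncomputable def M (c : ℝ) (r : ℝ) (n : ℕ) : ℝ := ((n : ℝ) + 1) * Q c n / n.factorial * r ^ n

lemma M_pos {c r : ℝ} (hc : 0 ≤ c) (hr : 0 < r) (n : ℕ) : 0 < M c r n := by
  have hQ := Q_pos hc n
  have hf : (0 : ℝ) < n.factorial := by positivity
  have : (0:ℝ) < r ^ n := by positivity
  rw [M]; positivity

lemma summable_M (c : ℝ) (hc : 0 ≤ c) {r : ℝ} (hr0 : 0 < r) (hr : r < 1) :
    Summable (M c r) := by
  have he : Tendsto (fun n : ℕ => 1 / ((n : ℝ) + 1)) atTop (nhds 0) :=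
    tendsto_one_div_add_atTop_nhds_zero_nat
  have hlim : Tendsto (fun n : ℕ =>
      (1 + 1 / ((n : ℝ) + 1)) * (1 + c * (1 / ((n : ℝ) + 1))) * r) atTop (nhds r) := by
    have : Tendsto (fun n : ℕ =>
        (1 + 1 / ((n : ℝ) + 1)) * (1 + c * (1 / ((n : ℝ) + 1))) * r) atTop
        (nhds ((1 + 0) * (1 + c * 0) * r)) :=
      (((tendsto_const_nhds.add he).mul (tendsto_const_nhds.add (he.const_mul c))).mul_const r)
    simpa using this
  have key : ∀ n : ℕ, ‖M c r (n + 1)‖ / ‖M c r n‖ =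
      (1 + 1 / ((n : ℝ) + 1)) * (1 + c * (1 / ((n : ℝ) + 1))) * r := by
    intro n
    have hQ := Q_pos hc n
    have h1 := (M_pos hc hr0 n).le
    have h2 := (M_pos hc hr0 (n + 1)).le
    rw [Real.norm_of_nonneg h2, Real.norm_of_nonneg h1, M, M]
    rw [show Q c (n+1) = Q c n * (c + 1 + n) from Finset.prod_range_succ _ _,
      Nat.factorial_succ, pow_succ]
    have hf : ((n.factorial : ℝ)) ≠ 0 := by positivity
    have hn1 : ((n:ℝ) + 1) ≠ 0 := by positivity
    push_cast
    field_simp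
    ring
  refine summable_of_ratio_test_tendsto_lt_one hr
    (Filter.Eventually.of_forall fun n => (M_pos hc hr0 n).ne') ?_
  exact hlim.congr fun n => (key n).symm

/-- real summability of the basic series -/
lemma summable_norm_P {δ : ℂ} {x : ℝ} (h0 : 0 ≤ x) (hx : x < 1) :
    Summable (fun n : ℕ => ‖P δ n‖ / n.factorial * x ^ n) := by
  set r := (x + 1) / 2 with hrdef
  have hr0 : 0 < r := by positivity
  have hr1 : r < 1 := by rw [hrdef]; linarith
  have hxr : x ≤ r := by rw [hrdef]; linarith
  refine (summable_M ‖δ‖ (norm_nonneg δ) hr0 hr1).of_nonneg_of_le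
    (fun n => by positivity) fun n => ?_
  rw [M]
  have h1 : ‖P δ n‖ / n.factorial ≤ ((n : ℝ) + 1) * Q ‖δ‖ n / n.factorial := by
    apply div_le_div_of_nonneg_right ?_ (by positivity)
    · calc ‖P δ n‖ ≤ Q ‖δ‖ n := P_norm_le δ n
        _ = 1 * Q ‖δ‖ n := (one_mul _).symm
        _ ≤ ((n : ℝ) + 1) * Q ‖δ‖ n := by
            have := (Q_pos (norm_nonneg δ) n).le
            nlinarith
  exact mul_le_mul h1 (pow_le_pow_left₀ h0 hxr n) (pow_nonneg h0 n) (div_pos (mul_pos (by positivity) (Q_pos (norm_nonneg δ) n)) (by positivity)).le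

lemma summable_P {δ : ℂ} {x : ℂ} (hx : ‖x‖ < 1) :
    Summable (fun n : ℕ => P δ n / n.factorial * x ^ n) := by
  refine Summable.of_norm_bounded (summable_norm_P (δ := δ) (norm_nonneg x) hx) fun n => ?_
  refine le_of_eq ?_
  simp [norm_mul, norm_div, norm_pow]



/-- norm bound for the differentiated series -/
lemma norm_P_deriv_le {δ : ℂ} {ρ : ℝ} (hρ0 : 0 < ρ) {y : ℂ} (hy : ‖y‖ ≤ ρ) (n : ℕ) :
    ‖P δ n / n.factorial * ((n : ℂ) * y ^ (n - 1))‖ ≤ M ‖δ‖ ρ n * ρ⁻¹ := by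
  have hQ := (Q_pos (norm_nonneg δ) n).le
  match n with
  | 0 => simp [M, Q]; positivity
  | (m + 1) =>
    have hfact : (0:ℝ) < (m+1).factorial := by positivity
    have key : ‖P δ (m+1) / (m+1).factorial * (((m+1 : ℕ) : ℂ) * y ^ m)‖
        = (((m+1 : ℕ)) : ℝ) * (‖P δ (m+1)‖ / (m+1).factorial) * ‖y‖ ^ m := by
      rw [norm_mul, norm_mul, norm_div, norm_pow, Complex.norm_natCast, Complex.norm_natCast]
      ring
    rw [show (m + 1 - 1 : ℕ) = m from rfl, key]
    simp only [M]
    rw [pow_succ, mul_assoc _ _ ρ⁻¹, mul_assoc _ ρ ρ⁻¹, mul_inv_cancel₀ hρ0.ne', mul_one]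
    have h1 : (((m+1 : ℕ)) : ℝ) * (‖P δ (m+1)‖ / (m+1).factorial)
        ≤ ((m+1 : ℕ) + 1 : ℝ) * Q ‖δ‖ (m+1) / (m+1).factorial := by
      rw [mul_div_assoc]
      apply mul_le_mul ?_ (div_le_div_of_nonneg_right (P_norm_le δ (m+1)) hfact.le)
        (by positivity) (by push_cast; positivity)
      push_cast; linarith
    exact mul_le_mul h1 (pow_le_pow_left₀ (norm_nonneg y) hy m) (by positivity)
      (by have := Q_pos (norm_nonneg δ) (m+1); positivity)

lemma summable_P_deriv {δ : ℂ} {ρ : ℝ} (hρ0 : 0 < ρ) (hρ1 : ρ < 1) {y : ℂ} (hy : ‖y‖ ≤ ρ) :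
    Summable (fun n : ℕ => P δ n / n.factorial * ((n : ℂ) * y ^ (n - 1))) :=
  Summable.of_norm_bounded
    ((summable_M ‖δ‖ (norm_nonneg δ) hρ0 hρ1).mul_right ρ⁻¹)
    (norm_P_deriv_le hρ0 hy)

/-- binomial series -/
lemma hasSum_binomial (δ : ℂ) {z : ℂ} (hz : ‖z‖ < 1) :
    HasSum (fun n : ℕ => P δ n / n.factorial * z ^ n) ((1 - z) ^ (-δ)) := by
  set ρ : ℝ := (‖z‖ + 1) / 2 with hρdef
  have hρ0 : 0 < ρ := by positivity
  have hρ1 : ρ < 1 := by rw [hρdef]; linarith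
  have hzρ : ‖z‖ < ρ := by rw [hρdef]; linarith
  set a : ℕ → ℂ := fun n => P δ n / n.factorial with hadef
  set t : Set ℂ := Metric.ball (0 : ℂ) ρ with htdef
  have hmem : ∀ {y : ℂ}, y ∈ t → ‖y‖ < ρ := by
    intro y hy; simpa [htdef, Metric.mem_ball, dist_eq_norm] using hy
  have hnorm_lt_one : ∀ {y : ℂ}, y ∈ t → ‖y‖ < 1 := fun hy => lt_trans (hmem hy) hρ1
  set f : ℂ → ℂ := fun y => ∑' n : ℕ, a n * y ^ n with hfdef
  set D : ℂ → ℂ := fun y => ∑' n : ℕ, a n * ((n : ℂ) * y ^ (n - 1)) with hDdef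
  -- derivative of the series
  have hderiv : ∀ y ∈ t, HasDerivAt f (D y) y := by
    intro y hy
    refine hasDerivAt_tsum_of_isPreconnected
      (u := fun n => M ‖δ‖ ρ n * ρ⁻¹)
      ((summable_M ‖δ‖ (norm_nonneg δ) hρ0 hρ1).mul_right ρ⁻¹)
      Metric.isOpen_ball (convex_ball (0:ℂ) ρ).isPreconnected
      (fun n w _ => (hasDerivAt_pow n w).const_mul (a n))
      (fun n w hw => ?_) (Metric.mem_ball_self hρ0) ?_ hy
    · exact norm_P_deriv_le hρ0 (hmem hw).le n
    · exact summable_P (δ := δ) (x := (0:ℂ)) (by simp)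
  -- the functional identity
  have hkey : ∀ y ∈ t, (1 - y) * D y = δ * f y := by
    intro y hy
    have hsumD : Summable (fun n : ℕ => a n * ((n : ℂ) * y ^ (n - 1))) :=
      summable_P_deriv hρ0 hρ1 (hmem hy).le
    have hsumT : Summable (fun n : ℕ => a n * y ^ n) := summable_P (hnorm_lt_one hy)
    have h1 : D y = ∑' n : ℕ, a (n + 1) * (((n + 1 : ℕ) : ℂ) * y ^ n) := by
      rw [hDdef]
      simp only
      rw [Summable.tsum_eq_zero_add hsumD]
      simp
    have h2 : ∀ n : ℕ, a (n + 1) * (((n + 1 : ℕ) : ℂ) * y ^ n)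
        = δ * (a n * y ^ n) + y * (a n * ((n : ℂ) * y ^ (n - 1))) := by
      intro n
      have ha1 : a (n + 1) * ((n + 1 : ℕ) : ℂ) = a n * (δ + n) := by
        simp only [hadef]
        have hcast : (((n + 1).factorial : ℕ) : ℂ) = ((n + 1 : ℕ) : ℂ) * (n.factorial : ℂ) := by
          rw [Nat.factorial_succ]; push_cast; ring
        have h1 : ((n + 1 : ℕ) : ℂ) ≠ 0 := Nat.cast_ne_zero.mpr (Nat.succ_ne_zero n)
        have h2 : ((n.factorial : ℕ) : ℂ) ≠ 0 := Nat.cast_ne_zero.mpr n.factorial_ne_zero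
        have h3 : ((n : ℂ) * (n.factorial : ℂ) + (n.factorial : ℂ)) ≠ 0 := by
          rw [show (n : ℂ) * (n.factorial : ℂ) + (n.factorial : ℂ)
              = ((n : ℂ) + 1) * (n.factorial : ℂ) from by ring]
          exact mul_ne_zero (by exact_mod_cast h1) h2
        rw [P_succ, hcast, div_mul_eq_mul_div, div_mul_eq_mul_div,
          div_eq_div_iff (mul_ne_zero h1 h2) h2]
        ring
      have hyn : y * (a n * ((n : ℂ) * y ^ (n - 1))) = (n : ℂ) * (a n * y ^ n) := by
        cases n with
        | zero => simp
        | succ m => rw [show (m + 1 - 1 : ℕ) = m from rfl]; ring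
      calc a (n + 1) * (((n + 1 : ℕ) : ℂ) * y ^ n)
          = (a (n + 1) * ((n + 1 : ℕ) : ℂ)) * y ^ n := by ring
        _ = (a n * (δ + n)) * y ^ n := by rw [ha1]
        _ = δ * (a n * y ^ n) + (n : ℂ) * (a n * y ^ n) := by ring
        _ = δ * (a n * y ^ n) + y * (a n * ((n : ℂ) * y ^ (n - 1))) := by rw [hyn]
    have h3 : D y = δ * f y + y * D y := by
      conv_lhs => rw [h1]
      rw [tsum_congr h2, Summable.tsum_add (hsumT.mul_left δ) (hsumD.mul_left y),
        tsum_mul_left, tsum_mul_left]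
    linear_combination h3
  -- zero derivative of the product
  have hF : ∀ y ∈ t, HasDerivAt (fun w => (1 - w) ^ δ * f w) 0 y := by
    intro y hy
    have hyre : (1 - y).re > 0 := by
      have : y.re < 1 := lt_of_le_of_lt (Complex.re_le_norm y) (hnorm_lt_one hy)
      simp [Complex.sub_re, Complex.one_re]
      linarith
    have h1y : (1 : ℂ) - y ∈ Complex.slitPlane := Or.inl hyre
    have hy1 : (1 : ℂ) - y ≠ 0 := Complex.slitPlane_ne_zero h1y
    have hcpow : HasDerivAt (fun w : ℂ => (1 - w) ^ δ) (δ * (1 - y) ^ (δ - 1) * (0 - 1)) y :=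
      ((hasDerivAt_const y (1 : ℂ)).sub (hasDerivAt_id y)).cpow_const h1y
    have hmul := hcpow.mul (hderiv y hy)
    have hval : δ * (1 - y) ^ (δ - 1) * (0 - 1) * f y + (1 - y) ^ δ * D y = 0 := by
      have hsplit : (1 - y) ^ δ = (1 - y) ^ (δ - 1) * (1 - y) := by
        rw [Complex.cpow_sub _ _ hy1, Complex.cpow_one]
        field_simp
      rw [hsplit]
      linear_combination ((1 - y) ^ (δ - 1)) * hkey y hy
    rw [hval] at hmul
    exact hmul
  -- constancy
  have h0t : (0 : ℂ) ∈ t := Metric.mem_ball_self hρ0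
  have hzt : z ∈ t := by simp only [htdef, Metric.mem_ball, dist_eq_norm, sub_zero]; exact hzρ
  have hFconst : (1 - z) ^ δ * f z = (1 - 0) ^ δ * f 0 := by
    exact (convex_ball (0 : ℂ) ρ).is_const_of_fderivWithin_eq_zero
      (fun y hy => ((hF y hy).differentiableAt).differentiableWithinAt)
      (fun y hy => by
        have h := ((hF y hy).hasFDerivAt.hasFDerivWithinAt).fderivWithin
          (Metric.isOpen_ball.uniqueDiffWithinAt hy)
        rw [h]
        ext
        simp) hzt h0t
  have hf0 : f 0 = 1 := by
    rw [hfdef]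
    simp only
    rw [tsum_eq_single 0 (fun n hn => by simp [zero_pow hn])]
    simp [hadef, P]
  have hz1 : (1 : ℂ) - z ≠ 0 := by
    intro h
    have : z = 1 := by linear_combination -h
    rw [this] at hz
    simp at hz
  have hne : (1 - z) ^ δ ≠ 0 := by
    intro h
    exact hz1 ((Complex.cpow_eq_zero_iff _ _).mp h).1
  have hfz : f z = (1 - z) ^ (-δ) := by
    rw [Complex.cpow_neg]
    have h1 : (1 - z) ^ δ * f z = 1 := by
      rw [hFconst, hf0, sub_zero, Complex.one_cpow, mul_one]
    exact eq_inv_of_mul_eq_one_left (by linear_combination h1)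
  have hsum : Summable (fun n : ℕ => P δ n / n.factorial * z ^ n) := summable_P hz
  have := hsum.hasSum
  rwa [show (∑' n : ℕ, P δ n / n.factorial * z ^ n) = f z from rfl, hfz] at this


end LapPrab

open LapPrab

/-- The Prabhakar generalized Mittag-Leffler function
`E^δ_{α,β}(z) = ∑ (δ)ₙ zⁿ/(Γ(αn+β) n!)`. -/
noncomputable def prabhakar (α β : ℝ) (δ : ℂ) (z : ℂ) : ℂ :=
  ∑' n : ℕ, (∏ j ∈ Finset.range n, (δ + j)) * z ^ n /
    (Complex.Gamma ((α * n + β : ℝ) : ℂ) * (n.factorial : ℂ))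

/-- For `α, β > 0`, `δ ∈ ℂ`, `b ∈ ℂ` and real `s > max(|b|^{1/α}, 0)`, the Laplace
transform of `t ↦ t^{β-1} E^δ_{α,β}(b t^α)` equals `s^{-β} (1 - b s^{-α})^{-δ}`. -/
theorem laplace_prabhakar (α β : ℝ) (hα : 0 < α) (hβ : 0 < β) (δ b : ℂ) (s : ℝ)
    (hs : max (‖b‖ ^ (1 / α)) 0 < s) :
    ∫ t in Set.Ioi (0 : ℝ),
        Complex.exp (-(s : ℂ) * t) * ((t ^ (β - 1) : ℝ) : ℂ) *
          prabhakar α β δ (b * ((t ^ α : ℝ) : ℂ))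
      = (s : ℂ) ^ (-(β : ℂ)) * (1 - b * (s : ℂ) ^ (-(α : ℂ))) ^ (-δ) := by
  have hs0 : (0 : ℝ) < s := lt_of_le_of_lt (le_max_right _ _) hs
  have hb : ‖b‖ < s ^ α := by
    have h1 : ‖b‖ ^ (1 / α) < s := lt_of_le_of_lt (le_max_left _ _) hs
    have h2 : (‖b‖ ^ (1 / α)) ^ α < s ^ α :=
      Real.rpow_lt_rpow (Real.rpow_nonneg (norm_nonneg b) _) h1 hα
    rwa [← Real.rpow_mul (norm_nonneg b), one_div_mul_cancel hα.ne',
      Real.rpow_one] at h2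
  have hcast : ∀ γ : ℝ, (((1 / s) ^ γ : ℝ) : ℂ) = (s : ℂ) ^ (-(γ : ℂ)) := by
    intro γ
    rw [one_div, Real.inv_rpow hs0.le, ← Real.rpow_neg hs0.le,
      Complex.ofReal_cpow hs0.le, Complex.ofReal_neg]
  set x : ℂ := b * (s : ℂ) ^ (-(α : ℂ)) with hxdef
  have hx_norm : ‖x‖ = ‖b‖ * (1 / s) ^ α := by
    rw [hxdef, norm_mul, ← hcast α, Complex.norm_real,
      Real.norm_of_nonneg (by positivity)]
  have hx1 : ‖x‖ < 1 := by
    rw [hx_norm, one_div, Real.inv_rpow hs0.le]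
    have hsα : 0 < s ^ α := Real.rpow_pos_of_pos hs0 α
    have := (div_lt_one hsα).mpr hb
    rwa [div_eq_mul_inv] at this
  set K : ℕ → ℂ := fun n =>
    P δ n * b ^ n / (Complex.Gamma ((α * n + β : ℝ) : ℂ) * (n.factorial : ℂ)) with hK
  set F : ℕ → ℝ → ℂ := fun n t =>
    (Complex.exp (-(s : ℂ) * t) * ((t ^ (β - 1) : ℝ) : ℂ)) *
      (P δ n * (b * ((t ^ α : ℝ) : ℂ)) ^ n /
        (Complex.Gamma ((α * n + β : ℝ) : ℂ) * (n.factorial : ℂ))) with hF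
  set g : ℕ → ℝ → ℝ := fun n t => t ^ (α * n + β - 1) * Real.exp (-(s * t)) with hg
  have hexp : ∀ n : ℕ, (0 : ℝ) < α * n + β := by intro n; positivity
  have hgint : ∀ n : ℕ, IntegrableOn (g n) (Set.Ioi 0) := by
    intro n
    have := integrableOn_rpow_mul_exp_neg_mul_rpow (p := 1) (s := α * n + β - 1) (b := s)
      (by linarith [hexp n]) zero_lt_one hs0
    simpa [Real.rpow_one, neg_mul, hg] using this
  have hgval : ∀ n : ℕ, ∫ t in Set.Ioi 0, g n t
      = (1 / s) ^ (α * n + β) * Real.Gamma (α * n + β) := fun n =>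
    Real.integral_rpow_mul_exp_neg_mul_Ioi (hexp n) hs0
  have hgnonneg : ∀ n : ℕ, ∀ t ∈ Set.Ioi (0 : ℝ), 0 ≤ g n t := fun n t ht =>
    mul_nonneg (Real.rpow_nonneg (le_of_lt ht) _) (Real.exp_pos _).le
  have hFeq : ∀ n : ℕ, ∀ t ∈ Set.Ioi (0 : ℝ), F n t = K n * ((g n t : ℝ) : ℂ) := by
    intro n t ht
    have ht0 : (0 : ℝ) < t := ht
    have hsplit : t ^ (α * (n : ℝ) + β - 1) = t ^ (α * (n : ℝ)) * t ^ (β - 1) := by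
      rw [← Real.rpow_add ht0]; ring_nf
    have hpow : ((t ^ α : ℝ) : ℂ) ^ n = ((t ^ (α * (n : ℝ)) : ℝ) : ℂ) := by
      rw [← Complex.ofReal_pow, ← Real.rpow_natCast (t ^ α) n, ← Real.rpow_mul ht0.le]
    have hexp2 : Complex.exp (-(s : ℂ) * t) = ((Real.exp (-(s * t)) : ℝ) : ℂ) := by
      rw [Complex.ofReal_exp, Complex.ofReal_neg, Complex.ofReal_mul, neg_mul]
    simp only [hF, hK, hg]
    rw [hexp2, mul_pow, hpow, hsplit]
    push_cast
    ring
  have hpt : ∀ t : ℝ,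
      Complex.exp (-(s : ℂ) * t) * ((t ^ (β - 1) : ℝ) : ℂ) *
        prabhakar α β δ (b * ((t ^ α : ℝ) : ℂ)) = ∑' n : ℕ, F n t := by
    intro t
    rw [prabhakar, ← tsum_mul_left]
    exact tsum_congr fun n => by simp only [hF, P]
  have hFint : ∀ n : ℕ, Integrable (F n) (volume.restrict (Set.Ioi 0)) := by
    intro n
    have h1 : Integrable (fun t => K n * ((g n t : ℝ) : ℂ)) (volume.restrict (Set.Ioi 0)) :=
      ((hgint n).ofReal (𝕜 := ℂ)).const_mul (K n)
    refine h1.congr ?_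
    filter_upwards [ae_restrict_mem measurableSet_Ioi] with t ht
    exact (hFeq n t ht).symm
  have hsplitR : ∀ n : ℕ, ((1 / s : ℝ)) ^ (α * (n : ℝ) + β) = ((1 / s) ^ α) ^ n * (1 / s) ^ β := by
    intro n
    rw [Real.rpow_add (by positivity), ← Real.rpow_natCast ((1 / s) ^ α) n,
      ← Real.rpow_mul (by positivity)]
  have hFval : ∀ n : ℕ, ∫ t in Set.Ioi 0, F n t
      = (s : ℂ) ^ (-(β : ℂ)) * (P δ n / n.factorial * x ^ n) := by
    intro n
    rw [setIntegral_congr_fun measurableSet_Ioi (fun t ht => hFeq n t ht),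
      integral_const_mul]
    rw [show (∫ t in Set.Ioi (0:ℝ), ((g n t : ℝ) : ℂ)) = ((∫ t in Set.Ioi (0:ℝ), g n t : ℝ) : ℂ)
      from integral_ofReal, hgval n]
    have hΓpos := Real.Gamma_pos_of_pos (hexp n)
    have hΓc : Complex.Gamma ((α * n + β : ℝ) : ℂ) ≠ 0 := by
      rw [Complex.Gamma_ofReal]
      exact Complex.ofReal_ne_zero.mpr hΓpos.ne'
    have hfc : ((n.factorial : ℕ) : ℂ) ≠ 0 := Nat.cast_ne_zero.mpr n.factorial_ne_zero
    simp only [hK, hxdef]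
    rw [← hcast α, ← hcast β, Complex.Gamma_ofReal, hsplitR n]
    push_cast
    have hΓc' : ((Real.Gamma (α * n + β) : ℝ) : ℂ) ≠ 0 := Complex.ofReal_ne_zero.mpr hΓpos.ne'
    field_simp
    ring
  have hnorm : ∀ n : ℕ, ∫ t in Set.Ioi 0, ‖F n t‖
      = ‖K n‖ * ((1 / s) ^ (α * n + β) * Real.Gamma (α * n + β)) := by
    intro n
    have heq : ∀ t ∈ Set.Ioi (0 : ℝ), ‖F n t‖ = ‖K n‖ * g n t := by
      intro t ht
      rw [hFeq n t ht, norm_mul, Complex.norm_real, Real.norm_of_nonneg (hgnonneg n t ht)]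
    rw [setIntegral_congr_fun measurableSet_Ioi heq, integral_const_mul, hgval n]
  have hq1 : ‖b‖ * (1 / s) ^ α < 1 := hx_norm ▸ hx1
  have hsum : Summable (fun n : ℕ => ∫ t in Set.Ioi 0, ‖F n t‖) := by
    refine Summable.congr ?_ (fun n => (hnorm n).symm)
    have hKval : ∀ n : ℕ, ‖K n‖ * ((1 / s) ^ (α * n + β) * Real.Gamma (α * n + β))
        = (1 / s) ^ β * (‖P δ n‖ / n.factorial * (‖b‖ * (1 / s) ^ α) ^ n) := by
      intro n
      have hΓpos := Real.Gamma_pos_of_pos (hexp n)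
      have hfc : ((n.factorial : ℕ) : ℝ) ≠ 0 := by positivity
      have hKn : ‖K n‖ = ‖P δ n‖ * ‖b‖ ^ n
          / (Real.Gamma (α * n + β) * n.factorial) := by
        simp only [hK]
        rw [norm_div, norm_mul, norm_pow, norm_mul, Complex.Gamma_ofReal, Complex.norm_real,
          Real.norm_of_nonneg hΓpos.le, Complex.norm_natCast]
      rw [hKn, hsplitR n, mul_pow]
      field_simp
    refine Summable.congr ?_ (fun n => (hKval n).symm)
    exact (summable_norm_P (δ := δ) (by positivity) hq1).mul_left _
  calc ∫ t in Set.Ioi (0 : ℝ),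
        Complex.exp (-(s : ℂ) * t) * ((t ^ (β - 1) : ℝ) : ℂ) *
          prabhakar α β δ (b * ((t ^ α : ℝ) : ℂ))
      = ∫ t in Set.Ioi (0 : ℝ), ∑' n : ℕ, F n t :=
        setIntegral_congr_fun measurableSet_Ioi (fun t _ => hpt t)
    _ = ∑' n : ℕ, ∫ t in Set.Ioi 0, F n t :=
        (integral_tsum_of_summable_integral_norm hFint hsum).symm
    _ = ∑' n : ℕ, (s : ℂ) ^ (-(β : ℂ)) * (P δ n / n.factorial * x ^ n) := tsum_congr hFval
    _ = (s : ℂ) ^ (-(β : ℂ)) * ∑' n : ℕ, (P δ n / n.factorial * x ^ n) := tsum_mul_left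
    _ = (s : ℂ) ^ (-(β : ℂ)) * (1 - x) ^ (-δ) := by rw [(hasSum_binomial δ hx1).tsum_eq]
end

section
/- For complex z with |z| < 1, real ξ with |ξ| < 1, and real λ > 0, the generating series identity (1 - z²)/(1 - 2ξz + z²)^{λ+1} = ∑_{j=0}^∞ ((j+λ)/λ) C_j^λ(ξ) z^j holds, where C_j^λ are the Gegenbauer polynomials. -/
open Complex Filter

noncomputable def binC (m : ℝ) (k : ℕ) : ℝ :=
  Real.Gamma (k + m) / (Real.Gamma m * k.factorial)

lemma binC_pos {m : ℝ} (hm : 0 < m) (k : ℕ) : 0 < binC m k := by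
  apply div_pos (Real.Gamma_pos_of_pos (by positivity))
  exact mul_pos (Real.Gamma_pos_of_pos hm) (by positivity)

lemma binC_zero {m : ℝ} (hm : 0 < m) : binC m 0 = 1 := by
  simp [binC, div_self (by positivity : Real.Gamma m * (Nat.factorial 0 : ℝ) ≠ 0),
    (Real.Gamma_pos_of_pos hm).ne']

lemma binC_succ {m : ℝ} (hm : 0 < m) (k : ℕ) :
    binC m (k + 1) * (k + 1) = binC m k * (k + m) := by
  have h1 : ((k : ℝ) + 1) + m = (k + m) + 1 := by ring
  have h2 : Real.Gamma (((k : ℝ) + 1) + m) = ((k : ℝ) + m) * Real.Gamma (k + m) := by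
    rw [h1, Real.Gamma_add_one (by positivity)]
  have hΓ : Real.Gamma m ≠ 0 := (Real.Gamma_pos_of_pos hm).ne'
  have hf : (Nat.factorial (k + 1) : ℝ) = (k + 1) * k.factorial := by
    push_cast [Nat.factorial_succ]; ring
  simp only [binC]
  push_cast [Nat.factorial_succ]
  rw [h2]
  field_simp

lemma tendsto_ratio_aux (a : ℝ) :
    Tendsto (fun k : ℕ => ((k : ℝ) + a) / ((k : ℝ) + 1)) atTop (nhds 1) := by
  have h : ∀ k : ℕ, ((k : ℝ) + a) / ((k : ℝ) + 1) = 1 + (a - 1) * (1 / ((k : ℝ) + 1)) := by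
    intro k
    have : ((k : ℝ) + 1) ≠ 0 := by positivity
    field_simp
    ring
  simp_rw [h]
  have := (tendsto_one_div_add_atTop_nhds_zero_nat).const_mul (a - 1)
  simpa using tendsto_const_nhds.add this

lemma binC_summable_master {m : ℝ} (hm : 0 < m) {r : ℝ} (hr0 : 0 < r) (hr1 : r < 1) :
    Summable (fun k => binC m k * (k + 1) * r ^ k) := by
  have hpos : ∀ k : ℕ, 0 < binC m k * (k + 1) * r ^ k := fun k => by
    have := binC_pos hm k; positivity
  apply summable_of_ratio_test_tendsto_lt_one hr1
    (Eventually.of_forall fun k => (hpos k).ne')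
  have heq : ∀ k : ℕ,
      ‖binC m (k+1) * (((k+1 : ℕ) : ℝ) + 1) * r ^ (k+1)‖ / ‖binC m k * (k + 1) * r ^ k‖ =
      (((k:ℝ) + m) / ((k:ℝ) + 1)) * ((((k:ℝ) + 2) / ((k:ℝ) + 1)) * r) := by
    intro k
    push_cast
    rw [Real.norm_eq_abs, Real.norm_eq_abs, abs_of_pos (by have := hpos (k+1); push_cast at this ⊢; convert this using 2),
      abs_of_pos (hpos k)]
    have h1 : binC m (k+1) = binC m k * ((k:ℝ) + m) / ((k:ℝ) + 1) := by
      have := binC_succ hm k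
      field_simp at this ⊢
      linarith [this]
    rw [h1]
    have hb := (binC_pos hm k).ne'
    have hk1 : ((k:ℝ) + 1) ≠ 0 := by positivity
    have hk2 : ((k:ℝ) + 1 + 1) ≠ 0 := by positivity
    have hrk : r ^ k ≠ 0 := by positivity
    rw [pow_succ]
    field_simp
    ring_nf
  simp_rw [heq]
  have := ((tendsto_ratio_aux m).mul ((tendsto_ratio_aux 2).mul_const r))
  simpa using this

lemma binC_summable {m : ℝ} (hm : 0 < m) {r : ℝ} (hr0 : 0 ≤ r) (hr1 : r < 1) :
    Summable (fun k => binC m k * r ^ k) := by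
  have hr0' : 0 < (1 + r) / 2 := by linarith
  have hr1' : (1 + r) / 2 < 1 := by linarith
  refine Summable.of_nonneg_of_le (fun k => ?_) (fun k => ?_)
    (binC_summable_master hm hr0' hr1')
  · have := (binC_pos hm k).le; positivity
  · have h1 : r ^ k ≤ ((1 + r) / 2) ^ k := pow_le_pow_left₀ hr0 (by linarith) k
    have h2 : binC m k * r ^ k ≤ binC m k * ((1+r)/2) ^ k :=
      mul_le_mul_of_nonneg_left h1 (binC_pos hm k).le
    have h3 : binC m k * ((1+r)/2) ^ k ≤ binC m k * (k+1) * ((1+r)/2) ^ k := by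
      have hb := (binC_pos hm k).le
      have hp : (0:ℝ) ≤ ((1+r)/2) ^ k := pow_nonneg hr0'.le k
      have hk : (0:ℝ) ≤ (k:ℝ) := Nat.cast_nonneg k
      have hd : binC m k * (k+1) * ((1+r)/2) ^ k - binC m k * ((1+r)/2) ^ k
          = (k:ℝ) * (binC m k * ((1+r)/2) ^ k) := by ring
      nlinarith [mul_nonneg hk (mul_nonneg hb hp)]
    linarith

lemma binC_summable_deriv {m : ℝ} (hm : 0 < m) {r : ℝ} (hr0 : 0 < r) (hr1 : r < 1) :
    Summable (fun k : ℕ => binC m k * (k * r ^ (k - 1))) := by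
  rw [← summable_nat_add_iff 1]
  have hmaster := (binC_summable_master hm hr0 hr1).mul_left (1 + m)
  refine Summable.of_nonneg_of_le (fun k => ?_) (fun k => ?_) hmaster
  · have := (binC_pos hm (k+1)).le; positivity
  · have hs : binC m (k+1) * ((k:ℝ)+1) = binC m k * ((k:ℝ) + m) := binC_succ hm k
    have hle : binC m k * ((k:ℝ) + m) ≤ (1 + m) * (binC m k * ((k:ℝ)+1)) := by
      have hb := (binC_pos hm k).le
      have hk : (0:ℝ) ≤ (k:ℝ) := Nat.cast_nonneg k
      nlinarith [mul_nonneg hb (mul_nonneg hm.le hk)]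
    have hpow : ((k:ℝ)+1) * r ^ (k + 1 - 1) = ((k:ℝ)+1) * r ^ k := by norm_num
    calc binC m (k+1) * (((k+1 : ℕ):ℝ) * r ^ (k + 1 - 1))
        = (binC m (k+1) * ((k:ℝ)+1)) * r ^ k := by push_cast; norm_num; ring
      _ = (binC m k * ((k:ℝ) + m)) * r ^ k := by rw [hs]
      _ ≤ ((1 + m) * (binC m k * ((k:ℝ)+1))) * r ^ k := by
          apply mul_le_mul_of_nonneg_right hle (by positivity)
      _ = (1 + m) * (binC m k * ((k:ℝ)+1) * r ^ k) := by ring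

lemma re_one_sub_pos {z : ℂ} (h : ‖z‖ < 1) : 0 < (1 - z).re := by
  have : z.re ≤ ‖z‖ := Complex.re_le_norm z
  simp only [Complex.sub_re, Complex.one_re]
  linarith

lemma one_sub_ne_zero' {z : ℂ} (h : ‖z‖ < 1) : (1 - z) ≠ 0 := by
  intro hc
  have := re_one_sub_pos h
  rw [hc] at this
  simp at this

lemma hasSum_binomial {m : ℝ} (hm : 0 < m) {u : ℂ} (hu : ‖u‖ < 1) :
    HasSum (fun k => ((binC m k : ℝ) : ℂ) * u ^ k) ((1 - u) ^ (-(m : ℂ))) := by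
  set r : ℝ := (1 + ‖u‖) / 2 with hr
  have hu0 : 0 ≤ ‖u‖ := norm_nonneg u
  have hr0 : 0 < r := by rw [hr]; linarith
  have hr1 : r < 1 := by rw [hr]; linarith
  have hur : ‖u‖ < r := by rw [hr]; linarith
  set t : Set ℂ := Metric.ball (0 : ℂ) r with ht
  have hmem : ∀ z ∈ t, ‖z‖ < r := by
    intro z hz
    simpa [Complex.dist_eq] using Metric.mem_ball.1 hz
  have h0t : (0 : ℂ) ∈ t := Metric.mem_ball_self hr0
  have hut : u ∈ t := by
    rw [ht, Metric.mem_ball, Complex.dist_eq]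
    simpa using hur
  set g : ℕ → ℂ → ℂ := fun k z => ((binC m k : ℝ) : ℂ) * z ^ k with hg
  set g' : ℕ → ℂ → ℂ := fun k z => ((binC m k : ℝ) : ℂ) * (k * z ^ (k - 1)) with hg'
  have hderiv : ∀ k (z : ℂ), HasDerivAt (g k) (g' k z) z := fun k z =>
    (hasDerivAt_pow k z).const_mul _
  set ub : ℕ → ℝ := fun k => binC m k * (k * r ^ (k - 1)) with hub
  have hub_sum : Summable ub := binC_summable_deriv hm hr0 hr1
  have hbound : ∀ k, ∀ z ∈ t, ‖g' k z‖ ≤ ub k := by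
    intro k z hz
    have hzr := hmem z hz
    have h1 : ‖g' k z‖ = binC m k * (k * ‖z‖ ^ (k - 1)) := by
      simp only [hg', norm_mul, norm_pow, Complex.norm_real, Complex.norm_natCast,
        Real.norm_eq_abs]
      rw [_root_.abs_of_nonneg (binC_pos hm k).le]
    rw [h1]
    have : ‖z‖ ^ (k-1) ≤ r ^ (k-1) :=
      pow_le_pow_left₀ (norm_nonneg z) hzr.le _
    have hb := (binC_pos hm k).le
    have hk : (0:ℝ) ≤ (k:ℝ) := Nat.cast_nonneg k
    exact mul_le_mul_of_nonneg_left (mul_le_mul_of_nonneg_left this hk) hb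
  have hg0 : Summable fun k => g k 0 := by
    apply summable_of_ne_finset_zero (s := {0})
    intro k hk
    simp only [Finset.mem_singleton] at hk
    simp [hg, zero_pow hk]
  have hconn : IsPreconnected t := (convex_ball (0:ℂ) r).isPreconnected
  have hopen : IsOpen t := Metric.isOpen_ball
  set F : ℂ → ℂ := fun z => ∑' k, g k z with hF
  have hFderiv : ∀ z ∈ t, HasDerivAt F (∑' k, g' k z) z := fun z hz =>
    hasDerivAt_tsum_of_isPreconnected hub_sum hopen hconn
      (fun k y _ => hderiv k y) hbound h0t hg0 hz
  have hsummg : ∀ z ∈ t, Summable fun k => g k z := fun z hz =>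
    summable_of_summable_hasDerivAt_of_isPreconnected hub_sum hopen hconn
      (fun k y _ => hderiv k y) hbound h0t hg0 hz
  have hFz : ∀ z ∈ t, HasSum (fun k => g k z) (F z) := fun z hz => (hsummg z hz).hasSum
  -- the key ODE relation
  have key : ∀ z ∈ t, (1 - z) * (∑' k, g' k z) = (m : ℂ) * F z := by
    intro z hz
    have hDsum : Summable fun k => g' k z :=
      Summable.of_norm_bounded hub_sum (fun k => hbound k z hz)
    set D := ∑' k, g' k z with hD
    have hDS : HasSum (fun k => g' k z) D := hDsum.hasSum
    have h1 : HasSum (fun k => g' (k + 1) z) D := by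
      have h0 : HasSum (fun k => g' k z) (D + ∑ i ∈ Finset.range 1, g' i z) := by
        convert hDS using 1
        simp [hg']
      exact (hasSum_nat_add_iff (f := fun k => g' k z) 1).2 h0
    have h1' : HasSum (fun k => ((binC m (k+1) : ℝ) : ℂ) * (((k:ℂ) + 1) * z ^ k)) D := by
      refine h1.congr_fun fun k => ?_
      simp only [hg']
      push_cast
      norm_num
    have h2 : HasSum (fun k => ((binC m k : ℝ) : ℂ) * ((k : ℂ) * z ^ k)) (z * D) := by
      have := hDS.mul_left z
      refine this.congr_fun fun k => ?_
      cases k with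
      | zero => simp [hg']
      | succ n =>
        simp only [hg']
        have : (z : ℂ) ^ (n + 1) = z * z ^ (n + 1 - 1) := by
          rw [Nat.add_sub_cancel, pow_succ]; ring
        rw [this]; ring
    have h3 := h1'.sub h2
    have h3' : HasSum (fun k => (m : ℂ) * (g k z)) ((1 - z) * D) := by
      have heqf : ∀ k : ℕ, ((binC m (k+1) : ℝ) : ℂ) * (((k:ℂ) + 1) * z ^ k)
          - ((binC m k : ℝ) : ℂ) * ((k : ℂ) * z ^ k) = (m : ℂ) * (g k z) := by
        intro k
        have hb : ((binC m (k+1) : ℝ) : ℂ) * (((k:ℂ) + 1)) = ((binC m k : ℝ):ℂ) * ((k:ℂ) + m) := by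
          have := binC_succ hm k
          push_cast
          exact_mod_cast congrArg (fun x : ℝ => (x : ℂ)) this
        have : ((binC m (k+1) : ℝ) : ℂ) * (((k:ℂ) + 1) * z ^ k)
            = (((binC m k : ℝ):ℂ) * ((k:ℂ) + m)) * z ^ k := by
          rw [← hb]; ring
        rw [this]
        simp only [hg]
        ring
      have := h3.congr_fun fun k => (heqf k).symm
      rw [show (1 - z) * D = D - z * D by ring]
      exact this
    have h4 : HasSum (fun k => (m : ℂ) * (g k z)) ((m : ℂ) * F z) := (hFz z hz).mul_left _
    exact h3'.unique h4
  -- H := (1-z)^m * F is constant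
  set H : ℂ → ℂ := fun z => (1 - z) ^ (m : ℂ) * F z with hH
  have hslit : ∀ z ∈ t, (1 - z) ∈ Complex.slitPlane := fun z hz =>
    Complex.mem_slitPlane_iff.2 (Or.inl (re_one_sub_pos ((hmem z hz).trans hr1)))
  have hne : ∀ z ∈ t, (1 - z) ≠ 0 := fun z hz => one_sub_ne_zero' ((hmem z hz).trans hr1)
  have hHderiv : ∀ z ∈ t, HasDerivAt H 0 z := by
    intro z hz
    have hd0 : HasDerivAt (fun w : ℂ => 1 - w) (-1) z := by
      simpa using (hasDerivAt_id z).const_sub 1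
    have hd1 : HasDerivAt (fun w : ℂ => (1 - w) ^ (m : ℂ))
        ((m : ℂ) * (1 - z) ^ ((m : ℂ) - 1) * (-1)) z := hd0.cpow_const (hslit z hz)
    have hd := hd1.mul (hFderiv z hz)
    refine HasDerivAt.congr_deriv hd ?_
    have hsplit : (1 - z) ^ (m : ℂ) = (1 - z) * (1 - z) ^ ((m : ℂ) - 1) := by
      have : (m : ℂ) = 1 + ((m : ℂ) - 1) := by ring
      rw [this, Complex.cpow_add _ _ (hne z hz), Complex.cpow_one]
      ring_nf
    rw [hsplit]
    have hk := key z hz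
    have : (1 - z) * (1 - z) ^ ((m:ℂ) - 1) * (∑' k, g' k z)
        = (1 - z) ^ ((m:ℂ) - 1) * ((1 - z) * (∑' k, g' k z)) := by ring
    rw [this, hk]
    ring
  have hconst : H u = H 0 := by
    have hdiff : DifferentiableOn ℂ H t := fun z hz =>
      (hHderiv z hz).differentiableAt.differentiableWithinAt
    refine (convex_ball (0:ℂ) r).is_const_of_fderivWithin_eq_zero hdiff ?_ hut h0t
    intro z hz
    have h1 : fderivWithin ℂ H t z = fderiv ℂ H z := fderivWithin_of_isOpen hopen hz
    rw [h1, (hHderiv z hz).hasFDerivAt.fderiv]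
    ext w
    simp
  have hF0 : F 0 = 1 := by
    have hs1 : HasSum (fun k => g k 0) (g 0 0) :=
      hasSum_single 0 (fun k hk => by simp [hg, zero_pow hk])
    have : g 0 0 = 1 := by simp [hg, binC_zero hm]
    rw [this] at hs1
    exact (hFz 0 h0t).unique hs1
  have hH0 : H 0 = 1 := by
    show (1 - (0:ℂ)) ^ (m : ℂ) * F 0 = 1
    rw [hF0]
    simp
  have hHu : (1 - u) ^ (m : ℂ) * F u = 1 := by
    rw [show (1 - u) ^ (m : ℂ) * F u = H u from rfl, hconst, hH0]
  have hcne : (1 - u) ^ (m : ℂ) ≠ 0 := by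
    intro hc
    rcases (Complex.cpow_eq_zero_iff _ _).1 hc with ⟨h1, _⟩
    exact (hne u hut) h1
  have hFu : F u = (1 - u) ^ (-(m : ℂ)) := by
    rw [Complex.cpow_neg]
    field_simp at hHu ⊢
    linear_combination hHu
  have := hFz u hut
  rwa [hFu] at this


/-- The Gegenbauer polynomial `C_n^λ(w)`. -/
noncomputable def gegenbauerC (lam : ℝ) (n : ℕ) (w : ℝ) : ℝ :=
  ∑ j ∈ Finset.range (n / 2 + 1),
    (-1 : ℝ) ^ j * Real.Gamma ((n : ℝ) - j + lam) /
      (Real.Gamma lam * (j.factorial : ℝ) * ((n - 2 * j).factorial : ℝ)) *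
        (2 * w) ^ (n - 2 * j)

lemma two_mul_le_of_mem_range {n j : ℕ} (hj : j ∈ Finset.range (n / 2 + 1)) : 2 * j ≤ n := by
  rw [Finset.mem_range, Nat.lt_succ_iff] at hj
  omega

lemma gegen_eq_sum (m : ℝ) (hm : 0 < m) (n : ℕ) (ξ : ℝ) :
    gegenbauerC m n ξ = ∑ j ∈ Finset.range (n / 2 + 1),
      (-1 : ℝ) ^ j * (binC m (n - j) * ((n - j).choose j)) * (2 * ξ) ^ (n - 2 * j) := by
  refine Finset.sum_congr rfl fun j hj => ?_
  have h2j : 2 * j ≤ n := two_mul_le_of_mem_range hj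
  have hjn : j ≤ n - j := by omega
  have hcast : ((n - j : ℕ) : ℝ) = (n : ℝ) - j := by
    push_cast [Nat.cast_sub (by omega : j ≤ n)]; ring
  have hchoose : (((n - j).choose j : ℕ) : ℝ)
      = ((n - j).factorial : ℝ) / ((j.factorial : ℝ) * ((n - 2 * j).factorial : ℝ)) := by
    rw [Nat.cast_choose ℝ hjn, show n - j - j = n - 2*j from by omega]
  have hΓ : Real.Gamma m ≠ 0 := (Real.Gamma_pos_of_pos hm).ne'
  have hf1 : (j.factorial : ℝ) ≠ 0 := Nat.cast_ne_zero.2 j.factorial_ne_zero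
  have hf2 : ((n - 2 * j).factorial : ℝ) ≠ 0 := Nat.cast_ne_zero.2 (n - 2*j).factorial_ne_zero
  have hf3 : ((n - j).factorial : ℝ) ≠ 0 := Nat.cast_ne_zero.2 (n - j).factorial_ne_zero
  rw [binC, hchoose, hcast]
  field_simp

lemma gegen_hasSum_small (m : ℝ) (hm : 0 < m) (ξ : ℝ) (hξ : |ξ| < 1) {z : ℂ}
    (hz : ‖z‖ < 1/4) :
    HasSum (fun n => ((gegenbauerC m n ξ : ℝ) : ℂ) * z ^ n)
      ((1 - 2 * (ξ:ℂ) * z + z ^ 2) ^ (-(m : ℂ))) := by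
  classical
  set T : ℕ × ℕ → ℂ := fun p =>
    if p.2 ≤ p.1 then
      ((binC m p.1 : ℝ) : ℂ) * ((p.1.choose p.2 : ℕ) : ℂ) * (2 * (ξ:ℂ)) ^ (p.1 - p.2)
        * (-1 : ℂ) ^ p.2 * z ^ (p.1 + p.2)
    else 0 with hT
  set P : ℕ × ℕ → ℝ := fun p =>
    if p.2 ≤ p.1 then
      binC m p.1 * ((p.1.choose p.2 : ℕ) : ℝ) * (2 * |ξ|) ^ (p.1 - p.2)
        * ‖z‖ ^ (p.1 + p.2)
    else 0 with hP
  have hnormT : ∀ p, ‖T p‖ = P p := by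
    rintro ⟨k, j⟩
    by_cases hjk : j ≤ k
    · simp only [hT, hP, if_pos hjk, norm_mul, norm_pow,
        Complex.norm_real, Real.norm_eq_abs, Complex.norm_natCast, Complex.norm_two]
      rw [show ‖(-1 : ℂ)‖ = 1 from by simp, _root_.abs_of_nonneg (binC_pos hm k).le]
      ring
    · simp [hT, hP, if_neg hjk]
  set ρ : ℝ := (2 * |ξ| + ‖z‖) * ‖z‖ with hρ
  have habsz : 0 ≤ ‖z‖ := norm_nonneg z
  have hξ0 : 0 ≤ |ξ| := abs_nonneg ξ
  have hρ0 : 0 ≤ ρ := by positivity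
  have hρ1 : ρ < 1 := by
    have h1 : 2 * |ξ| + ‖z‖ < 2 + 1/4 := by linarith
    have h2 : ρ ≤ (2 + 1/4) * ‖z‖ := by
      rw [hρ]; nlinarith
    nlinarith
  have hProw : ∀ k : ℕ, HasSum (fun j => P (k, j)) (binC m k * ρ ^ k) := by
    intro k
    have hfin : ∀ j ∉ Finset.range (k + 1), P (k, j) = 0 := by
      intro j hj
      rw [Finset.mem_range, Nat.lt_succ_iff] at hj
      simp [hP, if_neg hj]
    have := hasSum_sum_of_ne_finset_zero (L := SummationFilter.unconditional ℕ) hfin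
    convert this using 1
    rw [show ∑ j ∈ Finset.range (k+1), P (k, j)
        = ∑ j ∈ Finset.range (k+1), (‖z‖ ^ j * (2*|ξ|) ^ (k - j) * (k.choose j : ℝ))
            * (binC m k * ‖z‖ ^ k) from ?_]
    · rw [← Finset.sum_mul, ← add_pow, hρ, mul_pow, add_comm (‖z‖) (2 * |ξ|)]
      ring
    · refine Finset.sum_congr rfl fun j hj => ?_
      rw [Finset.mem_range, Nat.lt_succ_iff] at hj
      simp only [hP, if_pos hj]
      rw [pow_add]
      ring
  have hPsum : Summable P := by
    rw [summable_prod_of_nonneg]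
    · constructor
      · exact fun k => (hProw k).summable
      · apply Summable.congr (binC_summable hm hρ0 hρ1)
        intro k
        exact ((hProw k).tsum_eq).symm
    · intro p
      rw [← hnormT p]
      exact norm_nonneg _
  have hTsum : Summable T := by
    apply Summable.of_norm
    simpa only [hnormT] using hPsum
  obtain ⟨S, hTS⟩ := hTsum
  -- fiberwise over rows: identify S
  set u : ℂ := z * (2 * (ξ:ℂ) - z) with hu
  have hTrow : ∀ k : ℕ, HasSum (fun j => T (k, j)) (((binC m k : ℝ):ℂ) * u ^ k) := by
    intro k
    have hfin : ∀ j ∉ Finset.range (k + 1), T (k, j) = 0 := by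
      intro j hj
      rw [Finset.mem_range, Nat.lt_succ_iff] at hj
      simp [hT, if_neg hj]
    have h := hasSum_sum_of_ne_finset_zero (L := SummationFilter.unconditional ℕ) hfin
    convert h using 1
    rw [hu, mul_pow, show (2 * (ξ:ℂ) - z) ^ k = ((-z) + 2 * (ξ:ℂ)) ^ k from by ring_nf,
      add_pow]
    rw [Finset.mul_sum, Finset.mul_sum]
    refine Finset.sum_congr rfl fun j hj => ?_
    rw [Finset.mem_range, Nat.lt_succ_iff] at hj
    simp only [hT, if_pos hj]
    rw [neg_pow, pow_add]
    ring
  have hrows : HasSum (fun k => ((binC m k : ℝ):ℂ) * u ^ k) S :=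
    hTS.prod_fiberwise hTrow
  have huabs : ‖u‖ < 1 := by
    have h1 : ‖u‖ ≤ ‖z‖ * (2 * |ξ| + ‖z‖) := by
      rw [hu, norm_mul]
      apply mul_le_mul_of_nonneg_left _ habsz
      calc ‖2 * (ξ:ℂ) - z‖ ≤ ‖2 * (ξ:ℂ)‖ + ‖z‖ := by
            simpa using norm_sub_le (2 * (ξ:ℂ)) z
        _ = 2 * |ξ| + ‖z‖ := by
            rw [norm_mul]; simp [Complex.norm_real, Complex.norm_two]
    have : ‖z‖ * (2 * |ξ| + ‖z‖) = ρ := by rw [hρ]; ring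
    rw [this] at h1
    linarith
  have hbin := hasSum_binomial hm huabs
  have hS : S = (1 - 2 * (ξ:ℂ) * z + z ^ 2) ^ (-(m : ℂ)) := by
    have h1 : (1 : ℂ) - u = 1 - 2 * (ξ:ℂ) * z + z ^ 2 := by rw [hu]; ring
    rw [← h1]
    exact hrows.unique hbin
  rw [← hS]
  -- fiberwise over antidiagonals
  have hTsig : HasSum (T ∘ Finset.HasAntidiagonal.sigmaAntidiagonalEquivProd) S :=
    (Equiv.hasSum_iff _).2 hTS
  have hdiag : HasSum (fun n : ℕ => ∑ p ∈ Finset.HasAntidiagonal.antidiagonal n, T p) S := by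
    refine HasSum.sigma hTsig fun n => ?_
    have h := hasSum_fintype (fun c : {x // x ∈ Finset.HasAntidiagonal.antidiagonal n} => T (c : ℕ × ℕ))
    rw [Finset.sum_coe_sort] at h
    exact h
  refine hdiag.congr_fun fun n => ?_
  -- evaluate the antidiagonal sum
  rw [Finset.Nat.sum_antidiagonal_eq_sum_range_succ_mk, ← Finset.sum_range_reflect]
  have hstep1 : ∀ j ∈ Finset.range (n + 1),
      T (n + 1 - 1 - j, n - (n + 1 - 1 - j)) = T (n - j, j) := by
    intro j hj
    rw [Finset.mem_range, Nat.lt_succ_iff] at hj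
    rw [show n + 1 - 1 - j = n - j from by omega, show n - (n - j) = j from by omega]
  rw [Finset.sum_congr rfl hstep1]
  rw [← Finset.sum_subset (Finset.range_subset_range.2 (by omega : n / 2 + 1 ≤ n + 1)) ?van]
  case van =>
    intro j hj1 hj2
    rw [Finset.mem_range, Nat.lt_succ_iff] at hj1
    rw [Finset.mem_range, Nat.lt_succ_iff] at hj2
    have : ¬ (j ≤ n - j) := by omega
    simp [hT, if_neg this]
  rw [gegen_eq_sum m hm n ξ]
  push_cast
  rw [Finset.sum_mul]
  refine Finset.sum_congr rfl fun j hj => ?_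
  have h2j : 2 * j ≤ n := two_mul_le_of_mem_range hj
  have hjle : j ≤ n - j := by omega
  simp only [hT, if_pos hjle]
  rw [show n - j - j = n - 2 * j from by omega, show n - j + j = n from by omega]
  push_cast
  ring

lemma mul_mem_slitPlane_of_re_pos {u v : ℂ} (hu : 0 < u.re) (hv : 0 < v.re) :
    u * v ∈ Complex.slitPlane := by
  rw [Complex.mem_slitPlane_iff]
  by_cases him : (u * v).im = 0
  · left
    rw [Complex.mul_im] at him
    rw [Complex.mul_re]
    rcases eq_or_ne v.im 0 with hvim | hvim
    · have : u.re * v.im = 0 := by rw [hvim]; ring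
      have huim : u.im * v.re = 0 := by linarith
      have : u.im = 0 := by
        rcases mul_eq_zero.1 huim with h | h
        · exact h
        · exact absurd h hv.ne'
      rw [this]
      nlinarith
    · have huim : u.im = -(u.re * v.im) / v.re := by
        field_simp
        linarith
      rw [huim]
      have h1 : u.re * v.re - -(u.re * v.im) / v.re * v.im
          = u.re * (v.re ^ 2 + v.im ^ 2) / v.re := by
        field_simp
        ring
      rw [h1]
      have h2 : 0 < v.re ^ 2 + v.im ^ 2 := by positivity
      positivity
  · right; exact him

lemma quad_slitPlane {ξ : ℝ} (hξ : |ξ| < 1) {z : ℂ} (hz : ‖z‖ < 1) :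
    (1 - 2 * (ξ:ℂ) * z + z ^ 2) ∈ Complex.slitPlane := by
  set s : ℝ := Real.sqrt (1 - ξ ^ 2) with hs
  have hξ2 : ξ ^ 2 ≤ 1 := by nlinarith [abs_nonneg ξ, _root_.sq_abs ξ]
  have hs2 : ((s:ℝ):ℂ) ^ 2 = 1 - (ξ:ℂ) ^ 2 := by
    have : s ^ 2 = 1 - ξ ^ 2 := Real.sq_sqrt (by linarith)
    calc ((s:ℝ):ℂ) ^ 2 = ((s ^ 2 : ℝ) : ℂ) := by push_cast; ring
      _ = ((1 - ξ ^ 2 : ℝ) : ℂ) := by rw [this]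
      _ = 1 - (ξ:ℂ) ^ 2 := by push_cast; ring
  set α : ℂ := (ξ:ℂ) + (s:ℝ) * Complex.I with hα
  set β : ℂ := (ξ:ℂ) - (s:ℝ) * Complex.I with hβ
  have hI : Complex.I ^ 2 = -1 := Complex.I_sq
  have hfact : 1 - 2 * (ξ:ℂ) * z + z ^ 2 = (1 - α * z) * (1 - β * z) := by
    rw [hα, hβ]
    linear_combination (z ^ 2 * Complex.I ^ 2) * hs2 + (z ^ 2 * (1 - (ξ:ℂ) ^ 2)) * hI
  have habsα : ‖α‖ = 1 := by
    have h1 : Complex.normSq α = 1 := by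
      rw [hα]
      rw [Complex.normSq_apply]
      simp [Complex.add_re, Complex.add_im, Complex.ofReal_re, Complex.ofReal_im,
        Complex.mul_re, Complex.mul_im, Complex.I_re, Complex.I_im]
      have : s ^ 2 = 1 - ξ ^ 2 := Real.sq_sqrt (by linarith)
      nlinarith
    rw [← Complex.sq_norm] at h1
    nlinarith [norm_nonneg α]
  have habsβ : ‖β‖ = 1 := by
    have h1 : Complex.normSq β = 1 := by
      rw [hβ]
      rw [Complex.normSq_apply]
      simp [Complex.sub_re, Complex.sub_im, Complex.ofReal_re, Complex.ofReal_im,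
        Complex.mul_re, Complex.mul_im, Complex.I_re, Complex.I_im]
      have : s ^ 2 = 1 - ξ ^ 2 := Real.sq_sqrt (by linarith)
      nlinarith
    rw [← Complex.sq_norm] at h1
    nlinarith [norm_nonneg β]
  have hre : ∀ γ : ℂ, ‖γ‖ = 1 → 0 < (1 - γ * z).re := by
    intro γ hγ
    have : ‖γ * z‖ < 1 := by
      rw [norm_mul, hγ, one_mul]; exact hz
    exact re_one_sub_pos this
  rw [hfact]
  exact mul_mem_slitPlane_of_re_pos (hre α habsα) (hre β habsβ)

lemma quad_ne_zero {ξ : ℝ} (hξ : |ξ| < 1) {z : ℂ} (hz : ‖z‖ < 1) :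
    (1 - 2 * (ξ:ℂ) * z + z ^ 2) ≠ 0 :=
  Complex.slitPlane_ne_zero (quad_slitPlane hξ hz)

lemma gegen_hasSum (m : ℝ) (hm : 0 < m) (ξ : ℝ) (hξ : |ξ| < 1) {z : ℂ} (hz : ‖z‖ < 1) :
    HasSum (fun n => ((gegenbauerC m n ξ : ℝ) : ℂ) * z ^ n)
      ((1 - 2 * (ξ:ℂ) * z + z ^ 2) ^ (-(m : ℂ))) := by
  set G : ℂ → ℂ := fun w => (1 - 2 * (ξ:ℂ) * w + w ^ 2) ^ (-(m : ℂ)) with hG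
  have habsz : 0 ≤ ‖z‖ := norm_nonneg z
  set Rr : ℝ := (1 + ‖z‖) / 2 with hRr
  have hRr0 : 0 < Rr := by rw [hRr]; linarith
  have hRr1 : Rr < 1 := by rw [hRr]; linarith
  set R : NNReal := Rr.toNNReal with hR
  have hRcoe : ((R : NNReal) : ℝ) = Rr := Real.coe_toNNReal Rr hRr0.le
  have hR0 : 0 < R := by
    rw [hR]
    exact Real.toNNReal_pos.2 hRr0
  have hdiff : DifferentiableOn ℂ G (Metric.closedBall (0:ℂ) (R : ℝ)) := by
    intro w hw
    have hw1 : ‖w‖ < 1 := by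
      have := Metric.mem_closedBall.1 hw
      rw [Complex.dist_eq, sub_zero] at this
      rw [hRcoe] at this
      calc ‖w‖ ≤ Rr := this
        _ < 1 := hRr1
    apply DifferentiableAt.differentiableWithinAt
    apply DifferentiableAt.cpow
    · fun_prop
    · fun_prop
    · exact quad_slitPlane hξ hw1
  have hps : HasFPowerSeriesOnBall G (cauchyPowerSeries G 0 R) 0 R :=
    hdiff.hasFPowerSeriesOnBall hR0
  set p : FormalMultilinearSeries ℂ ℂ ℂ :=
    FormalMultilinearSeries.ofScalars ℂ (fun n => ((gegenbauerC m n ξ : ℝ) : ℂ)) with hp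
  have hcoeff : ∀ n, p.coeff n = ((gegenbauerC m n ξ : ℝ) : ℂ) := by
    intro n
    rw [hp, FormalMultilinearSeries.coeff]
    have h := FormalMultilinearSeries.ofScalars_apply_eq
      (c := fun n => ((gegenbauerC m n ξ : ℝ) : ℂ)) (1:ℂ) n
    simpa using h
  have hat2 : HasFPowerSeriesAt G p 0 := by
    rw [hasFPowerSeriesAt_iff]
    filter_upwards [Metric.ball_mem_nhds (0:ℂ) (by norm_num : (0:ℝ) < 1/4)] with w hw
    have hw4 : ‖w‖ < 1/4 := by
      have := Metric.mem_ball.1 hw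
      rwa [Complex.dist_eq, sub_zero] at this
    have hsmall := gegen_hasSum_small m hm ξ hξ hw4
    rw [zero_add]
    refine hsmall.congr_fun fun n => ?_
    rw [hcoeff n, smul_eq_mul]
    ring
  have huniq : p = cauchyPowerSeries G 0 R :=
    hat2.eq_formalMultilinearSeries hps.hasFPowerSeriesAt
  have hzRr : ‖z‖ < Rr := by rw [hRr]; linarith
  have hzmem : z ∈ EMetric.ball (0:ℂ) ((R : NNReal) : ENNReal) := by
    show z ∈ Metric.eball (0:ℂ) ((R : NNReal) : ENNReal)
    rw [Metric.mem_eball, edist_zero_right, enorm_eq_nnnorm, ENNReal.coe_lt_coe, ← NNReal.coe_lt_coe, hRcoe,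
      coe_nnnorm]
    exact hzRr
  have hsum := hps.hasSum hzmem
  rw [← huniq, zero_add] at hsum
  refine hsum.congr_fun fun n => ?_
  rw [hp]
  have h := FormalMultilinearSeries.ofScalars_apply_eq
    (c := fun n => ((gegenbauerC m n ξ : ℝ) : ℂ)) z n
  rw [h, smul_eq_mul]

lemma gegen_rec (lam : ℝ) (hlam : 0 < lam) (ξ : ℝ) {n : ℕ} (hn : 2 ≤ n) :
    gegenbauerC (lam+1) n ξ - gegenbauerC (lam+1) (n-2) ξ
      = (((n:ℝ) + lam)/lam) * gegenbauerC lam n ξ := by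
  have hΓpos := Real.Gamma_pos_of_pos hlam
  have hΓ : Real.Gamma lam ≠ 0 := hΓpos.ne'
  have hΓ1 : Real.Gamma (lam+1) = lam * Real.Gamma lam := by
    simpa using Real.Gamma_add_one hlam.ne'
  set C : ℝ := ((n:ℝ) + lam)/lam with hC
  set f1 : ℕ → ℝ := fun j => (-1:ℝ)^j * Real.Gamma ((n:ℝ) - j + (lam+1)) /
      (Real.Gamma (lam+1) * (j.factorial : ℝ) * ((n - 2*j).factorial : ℝ))
        * (2*ξ)^(n - 2*j) with hf1
  set f2 : ℕ → ℝ := fun j => (-1:ℝ)^j * Real.Gamma (((n-2:ℕ):ℝ) - j + (lam+1)) /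
      (Real.Gamma (lam+1) * (j.factorial : ℝ) * (((n-2) - 2*j).factorial : ℝ))
        * (2*ξ)^((n-2) - 2*j) with hf2
  set g : ℕ → ℝ := fun j => (-1:ℝ)^j * Real.Gamma ((n:ℝ) - j + lam) /
      (Real.Gamma lam * (j.factorial : ℝ) * ((n - 2*j).factorial : ℝ))
        * (2*ξ)^(n - 2*j) with hg
  have hrepr1 : gegenbauerC (lam+1) n ξ = ∑ j ∈ Finset.range (n/2 + 1), f1 j := rfl
  have hrepr2 : gegenbauerC (lam+1) (n-2) ξ = ∑ j ∈ Finset.range (n/2), f2 j := by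
    unfold gegenbauerC
    rw [show (n-2)/2 + 1 = n/2 from by omega]
  have hrepr3 : gegenbauerC lam n ξ = ∑ j ∈ Finset.range (n/2 + 1), g j := rfl
  have h0 : f1 0 = C * g 0 := by
    have hpos : (0:ℝ) < (n:ℝ) + lam := by positivity
    have hΓn : Real.Gamma ((n:ℝ) - 0 + (lam+1)) = ((n:ℝ) + lam) * Real.Gamma ((n:ℝ) - 0 + lam) := by
      rw [show (n:ℝ) - 0 + (lam+1) = ((n:ℝ) + lam) + 1 from by ring, Real.Gamma_add_one hpos.ne']
      rw [show (n:ℝ) - 0 + lam = (n:ℝ) + lam from by ring]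
    simp only [hf1, hg, hC, hΓn, hΓ1]
    have hfn : ((n - 2*0).factorial : ℝ) ≠ 0 := Nat.cast_ne_zero.2 (Nat.factorial_ne_zero _)
    field_simp
    rw [Nat.cast_zero, hΓn]
    ring
  have hterm : ∀ j ∈ Finset.range (n/2), f1 (j+1) - f2 j = C * g (j+1) := by
    intro j hj
    rw [Finset.mem_range] at hj
    have h2j : 2*(j+1) ≤ n := by omega
    have hjn : j + 1 ≤ n := by omega
    have hjr : ((j:ℝ)+1) ≤ (n:ℝ) := by exact_mod_cast hjn
    have hargpos : 0 < (n:ℝ) - ((j:ℝ)+1) + lam := by linarith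
    have e1 : (n-2) - 2*j = n - 2*(j+1) := by omega
    have e2 : ((n-2:ℕ):ℝ) = (n:ℝ) - 2 := by
      push_cast [hn]
      ring
    have e3 : (((j+1:ℕ)):ℝ) = (j:ℝ)+1 := by push_cast; ring
    have hΓa : Real.Gamma ((n:ℝ) - ((j:ℝ)+1) + (lam+1))
        = ((n:ℝ) - ((j:ℝ)+1) + lam) * Real.Gamma ((n:ℝ) - ((j:ℝ)+1) + lam) := by
      rw [show (n:ℝ) - ((j:ℝ)+1) + (lam+1) = ((n:ℝ) - ((j:ℝ)+1) + lam) + 1 from by ring,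
        Real.Gamma_add_one hargpos.ne']
    have hfact : (((j+1).factorial : ℕ) : ℝ) = ((j:ℝ)+1) * (j.factorial:ℝ) := by
      push_cast [Nat.factorial_succ]
      ring
    simp only [hf1, hf2, hg, hC, e1, e2, e3, hfact, hΓ1]
    rw [show (n:ℝ) - 2 - (j:ℝ) + (lam+1) = (n:ℝ) - ((j:ℝ)+1) + lam from by ring, hΓa]
    have hfj : (j.factorial:ℝ) ≠ 0 := Nat.cast_ne_zero.2 (Nat.factorial_ne_zero _)
    have hfn : ((n - 2*(j+1)).factorial : ℝ) ≠ 0 := Nat.cast_ne_zero.2 (Nat.factorial_ne_zero _)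
    have hj1 : ((j:ℝ)+1) ≠ 0 := by positivity
    rw [pow_succ]
    field_simp
    ring
  rw [hrepr1, hrepr2, hrepr3, Finset.sum_range_succ' f1 (n/2), Finset.sum_range_succ' g (n/2)]
  have hsub : (∑ j ∈ Finset.range (n/2), f1 (j+1) + f1 0) - ∑ j ∈ Finset.range (n/2), f2 j
      = ∑ j ∈ Finset.range (n/2), (f1 (j+1) - f2 j) + f1 0 := by
    rw [Finset.sum_sub_distrib]
    ring
  rw [hsub, Finset.sum_congr rfl hterm, h0, ← Finset.mul_sum]
  ring

lemma gegen_comb_base (lam : ℝ) (hlam : 0 < lam) (ξ : ℝ) {n : ℕ} (hn : n < 2) :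
    gegenbauerC (lam+1) n ξ = (((n:ℝ) + lam)/lam) * gegenbauerC lam n ξ := by
  have hΓ : Real.Gamma lam ≠ 0 := (Real.Gamma_pos_of_pos hlam).ne'
  have hΓ1 : Real.Gamma (lam+1) = lam * Real.Gamma lam := by
    simpa using Real.Gamma_add_one hlam.ne'
  interval_cases n
  · unfold gegenbauerC
    norm_num [Finset.sum_range_one]
    have h1 : Real.Gamma (lam+1) ≠ 0 := by rw [hΓ1]; positivity
    field_simp
  · unfold gegenbauerC
    norm_num [Finset.sum_range_one]
    rw [show (1:ℝ) + (lam + 1) = (lam + 1) + 1 from by ring,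
      Real.Gamma_add_one (by positivity : lam + 1 ≠ 0),
      show (1:ℝ) + lam = lam + 1 from by ring,
      Real.Gamma_add_one hlam.ne']
    have h1 : lam * Real.Gamma lam ≠ 0 := by positivity
    field_simp

/-- Poisson kernel expansion: for `|z| < 1`, `|ξ| < 1`, `λ > 0`,
`(1 - z²)/(1 - 2ξz + z²)^{λ+1} = ∑ ((j+λ)/λ) C_j^λ(ξ) z^j`. -/
theorem poisson_kernel_gegenbauer (lam : ℝ) (hlam : 0 < lam) (ξ : ℝ) (hξ : |ξ| < 1)
    (z : ℂ) (hz : ‖z‖ < 1) :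
    HasSum (fun j : ℕ => ((((j : ℝ) + lam) / lam : ℝ) : ℂ) * ((gegenbauerC lam j ξ : ℝ) : ℂ) * z ^ j)
      ((1 - z ^ 2) / (1 - 2 * (ξ : ℂ) * z + z ^ 2) ^ ((lam : ℂ) + 1)) := by
  have hm : 0 < lam + 1 := by linarith
  have h1 := gegen_hasSum (lam+1) hm ξ hξ hz
  have hexp : -(((lam + 1 : ℝ)) : ℂ) = -((lam:ℂ)+1) := by push_cast; ring
  rw [hexp] at h1
  set w : ℂ := 1 - 2*(ξ:ℂ)*z + z^2 with hw
  set S : ℂ := w ^ (-((lam:ℂ)+1)) with hS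
  have h2 : HasSum (fun n => ((gegenbauerC (lam+1) n ξ : ℝ):ℂ) * z^(n+2)) (z^2 * S) := by
    refine (h1.mul_left (z^2)).congr_fun fun n => ?_
    rw [pow_add]
    ring
  set f : ℕ → ℂ :=
    fun n => (if 2 ≤ n then ((gegenbauerC (lam+1) (n-2) ξ : ℝ):ℂ) else 0) * z^n with hf
  have h3 : HasSum f (z^2 * S) := by
    have h2' : HasSum (fun n => f (n+2)) (z^2 * S) := by
      refine h2.congr_fun fun n => ?_
      simp only [hf]
      rw [if_pos (by omega : 2 ≤ n+2), Nat.add_sub_cancel]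
    have h := (hasSum_nat_add_iff (f := f) 2).1 h2'
    have hzero : ∑ i ∈ Finset.range 2, f i = 0 := by
      rw [Finset.sum_range_succ, Finset.sum_range_one]
      simp [hf]
    rw [hzero, add_zero] at h
    exact h
  have h4 := h1.sub h3
  have hwne : w ^ ((lam:ℂ)+1) ≠ 0 := by
    intro hc
    rcases (Complex.cpow_eq_zero_iff _ _).1 hc with ⟨hc1, _⟩
    exact quad_ne_zero hξ hz hc1
  have hval : (1 - z^2) / w ^ ((lam:ℂ)+1) = S - z^2 * S := by
    rw [hS, Complex.cpow_neg]
    field_simp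
  rw [hval]
  refine h4.congr_fun fun n => ?_
  by_cases hn2 : 2 ≤ n
  · simp only [hf, if_pos hn2]
    have hrec := gegen_rec lam hlam ξ hn2
    rw [← Complex.ofReal_mul, ← hrec, Complex.ofReal_sub]
    ring
  · simp only [hf, if_neg hn2]
    have hb := gegen_comb_base lam hlam ξ (by omega : n < 2)
    rw [← Complex.ofReal_mul, ← hb]
    ring
end
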